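/- arXiv:1008.3517 — 3 statements merged into one kernel-verified Lean document; each statement's English description precedes it below -/
import Mathlib

section
/- Let a, b > 0 with a > 1 or b > 1, and let Λ = {(m₁, m₂, a n₁, b n₂) : m₁, m₂, n₁, n₂ ∈ ℤ} ⊂ ℝ² × ℝ². Then the Gabor system (g₂, Λ) is incomplete in L²(ℝ²): there exists a nonzero F ∈ L²(ℝ²) with ⟨F, π(λ)g₂⟩ = 0 for all λ ∈ Λ. -/
open MeasureTheory Complex

noncomputable section

/-- Euclidean dot product on `ι → ℝ`. -/
def dotR {ι : Type*} [Fintype ι] (x y : ι → ℝ) : ℝ := ∑ i, x i * y i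

/-- Time-frequency shift `π(x,ω) g (t) = e^{2πi⟨ω,t⟩} g(t-x)`. -/
def tfShift {ι : Type*} [Fintype ι] (x ω : ι → ℝ) (g : (ι → ℝ) → ℂ) : (ι → ℝ) → ℂ :=
  fun t => Complex.exp (2 * Real.pi * Complex.I * (dotR ω t : ℝ)) * g (t - x)

/-- The Gabor coefficient `⟨f, π(x,ω) g⟩` in `L²`; equivalently the
short-time Fourier transform `V_g f (x, ω)`. -/
def gaborCoef {ι : Type*} [Fintype ι] (f g : (ι → ℝ) → ℂ) (x ω : ι → ℝ) : ℂ :=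
  ∫ t : ι → ℝ, f t * (starRingEnd ℂ) (tfShift x ω g t)

/-- `(g, Λ)` satisfies the frame inequalities for `L²(ℝ^ι)` with bounds `A`, `B`. -/
def IsGaborFrameWith {ι : Type*} [Fintype ι] (g : (ι → ℝ) → ℂ)
    (Λ : Set ((ι → ℝ) × (ι → ℝ))) (A B : ℝ) : Prop :=
  ∀ f : (ι → ℝ) → ℂ, MemLp f 2 volume →
    A * (∫ t, ‖f t‖ ^ 2) ≤
        (∑' lam : Λ, ‖gaborCoef f g (lam : ((ι → ℝ) × (ι → ℝ))).1 (lam : ((ι → ℝ) × (ι → ℝ))).2‖ ^ 2) ∧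
    (∑' lam : Λ, ‖gaborCoef f g (lam : ((ι → ℝ) × (ι → ℝ))).1 (lam : ((ι → ℝ) × (ι → ℝ))).2‖ ^ 2) ≤
        B * (∫ t, ‖f t‖ ^ 2)

/-- `(g, Λ)` is a frame for `L²(ℝ^ι)`. -/
def GaborFrame {ι : Type*} [Fintype ι] (g : (ι → ℝ) → ℂ)
    (Λ : Set ((ι → ℝ) × (ι → ℝ))) : Prop :=
  ∃ A B : ℝ, 0 < A ∧ 0 < B ∧ IsGaborFrameWith g Λ A B

/-- `(g, Λ)` is complete in `L²(ℝ^ι)`. -/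
def GaborComplete {ι : Type*} [Fintype ι] (g : (ι → ℝ) → ℂ)
    (Λ : Set ((ι → ℝ) × (ι → ℝ))) : Prop :=
  ∀ f : (ι → ℝ) → ℂ, MemLp f 2 volume →
    (∀ lam ∈ Λ, gaborCoef f g lam.1 lam.2 = 0) → f =ᵐ[volume] 0

/-- The normalized Gaussian `g_d(t) = 2^{d/4} e^{-π ‖t‖²}` in dimension `d = card ι`. -/
def gaussian (ι : Type*) [Fintype ι] : (ι → ℝ) → ℂ :=
  fun t => (((2 : ℝ) ^ ((Fintype.card ι : ℝ) / 4) * Real.exp (-(Real.pi * dotR t t)) : ℝ) : ℂ)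


lemma aux_integrable_exp (c d : ℝ) (hd : 0 < d) :
    Integrable (fun t : ℝ => Real.exp (c * |t| - d * t ^ 2)) := by
  have key : ∀ t : ℝ, ‖Real.exp (c * |t| - d * t ^ 2)‖
      ≤ Real.exp (c ^ 2 / (2 * d)) * Real.exp (-(d / 2) * t ^ 2) := by
    intro t
    rw [Real.norm_eq_abs, abs_of_pos (Real.exp_pos _), ← Real.exp_add]
    apply Real.exp_le_exp.2
    rw [← sub_nonneg]
    have ht2 : t ^ 2 = |t| ^ 2 := (_root_.sq_abs t).symm
    have : c ^ 2 / (2 * d) + -(d / 2) * t ^ 2 - (c * |t| - d * t ^ 2)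
        = (c - d * |t|) ^ 2 / (2 * d) := by
      field_simp; rw [ht2]; ring
    rw [this]; positivity
  have h := (integrable_exp_neg_mul_sq (by linarith : (0:ℝ) < d / 2)).const_mul
      (Real.exp (c ^ 2 / (2 * d)))
  refine h.mono' ?_ (Filter.Eventually.of_forall key)
  exact (((measurable_abs.const_mul c).sub
      ((measurable_id.pow_const 2).const_mul d)).exp).aestronglyMeasurable

def Wfun (a : ℝ) (k : ℤ) : ℝ := (-1 : ℝ) ^ k * Real.exp (-(Real.pi / a) * (k ^ 2 + k))

def f1 (a : ℝ) : ℝ → ℂ := fun t => ((Wfun a ⌊a * t⌋ * Real.exp (Real.pi * t ^ 2) : ℝ) : ℂ)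

lemma measurable_f1 (a : ℝ) : Measurable (f1 a) := by
  apply Measurable.comp measurable_ofReal
  exact ((Measurable.of_discrete (f := Wfun a)).comp
    (measurable_id.const_mul a).floor).mul ((measurable_id.pow_const 2).const_mul Real.pi).exp

lemma f1_ne_zero (a : ℝ) (t : ℝ) : f1 a t ≠ 0 := by
  simp only [f1, ne_eq, ofReal_eq_zero]
  apply mul_ne_zero (mul_ne_zero _ (Real.exp_ne_zero _)) (Real.exp_ne_zero _)
  exact zpow_ne_zero _ (by norm_num)

lemma norm_f1 (a : ℝ) (t : ℝ) :
    ‖f1 a t‖ = Real.exp (-(Real.pi / a) * ((⌊a * t⌋:ℝ) ^ 2 + ⌊a * t⌋) + Real.pi * t ^ 2) := by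
  have habs : |(-1:ℝ) ^ ⌊a * t⌋| = 1 := by
    rcases Int.even_or_odd ⌊a*t⌋ with h | h
    · rw [h.neg_one_zpow, abs_one]
    · rw [h.neg_one_zpow, abs_neg, abs_one]
  rw [f1, Complex.norm_real, Real.norm_eq_abs, Wfun, abs_mul, abs_mul,
    abs_of_pos (Real.exp_pos _), abs_of_pos (Real.exp_pos _), habs, one_mul, Real.exp_add]

lemma floor_sq_key (a t : ℝ) (ha0 : 0 < a) :
    ((⌊a * t⌋:ℝ) ^ 2 + ⌊a * t⌋) ≥ a ^ 2 * t ^ 2 - a * |t| - 1/4 := by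
  set k : ℤ := ⌊a * t⌋ with hk
  have h1 : (k : ℝ) ≤ a * t := Int.floor_le _
  have h2 : a * t - 1 < k := Int.sub_one_lt_floor _
  rcases abs_cases (a * t) with ⟨he, hpos⟩ | ⟨he, hneg⟩
  · have hat : a * |t| = a * t := by
      rcases abs_cases t with ⟨h, _⟩ | ⟨h, hn⟩
      · rw [h]
      · rw [h]; nlinarith
    have hk0 : (0:ℝ) ≤ k := by
      have : (-1:ℤ) < k := by exact_mod_cast lt_of_le_of_lt (by linarith : (-1:ℝ) ≤ a*t - 1) h2
      exact_mod_cast this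
    nlinarith [mul_nonneg (by linarith : (0:ℝ) ≤ (k:ℝ) + a*t) (by linarith : (0:ℝ) ≤ (k:ℝ) - a*t + 1)]
  · have hat : a * |t| = -(a * t) := by
      rcases abs_cases t with ⟨h, hp⟩ | ⟨h, _⟩
      · rw [h]; nlinarith
      · rw [h]; ring
    rcases le_or_gt (a * t + 1/2) 0 with hu | hu
    · nlinarith [mul_nonneg (by linarith : (0:ℝ) ≤ a*t - k) (by linarith : (0:ℝ) ≤ -((k:ℝ) + a*t + 1))]
    · have hkm : k = -1 := by
        have hlt : (k:ℝ) < 0 := by linarith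
        have hub : k < 0 := by exact_mod_cast hlt
        have hlb : (-2:ℤ) < k := by exact_mod_cast lt_of_le_of_lt (by linarith : (-2:ℝ) ≤ a*t-1) h2
        omega
      rw [hkm]; push_cast; nlinarith
  
lemma f1_bound (a : ℝ) (ha : 1 ≤ a) (t : ℝ) :
    ‖f1 a t‖ ≤ Real.exp (Real.pi / (4 * a)) *
      Real.exp (Real.pi * |t| - Real.pi * (a - 1) * t ^ 2) := by
  have ha0 : 0 < a := by linarith
  have hπ := Real.pi_pos
  rw [norm_f1, ← Real.exp_add]
  apply Real.exp_le_exp.2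
  have key := floor_sq_key a t ha0
  have hdiv := mul_le_mul_of_nonpos_left key (neg_nonpos.mpr (by positivity) : -(Real.pi/a) ≤ 0)
  have hexpand : -(Real.pi/a) * (a^2*t^2 - a*|t| - 1/4)
      = Real.pi/(4*a) + Real.pi*|t| - Real.pi*a*t^2 := by
    field_simp; ring
  rw [hexpand] at hdiv
  have hring : Real.pi*(a-1)*t^2 = Real.pi*a*t^2 - Real.pi*t^2 := by ring
  linarith

lemma tsum_cancel (c : ℝ) (m : ℤ) :
    ∑' k : ℤ, (((-1:ℝ)^k * Real.exp (-c * ((k:ℝ)^2 + (1-2*(m:ℝ))*k)) : ℝ) : ℂ) = 0 := by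
  set term : ℤ → ℂ := fun k => (((-1:ℝ)^k * Real.exp (-c * ((k:ℝ)^2 + (1-2*(m:ℝ))*k)) : ℝ) : ℂ)
    with hterm
  have hE := (Equiv.subLeft (2*m-1)).tsum_eq term
  have hneg : ∀ k : ℤ, term (Equiv.subLeft (2*m-1) k) = -term k := by
    intro k
    have hsgn : (-1:ℝ)^(2*m-1-k) = -((-1:ℝ)^k) := by
      have h1 : (-1:ℝ)^(2*m-1-k) * (-1:ℝ)^k = (-1:ℝ)^(2*m-1) := by
        rw [← zpow_add₀ (by norm_num : (-1:ℝ) ≠ 0)]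
        congr 1; ring
      have h2 : (-1:ℝ)^(2*m-1) = -1 := Odd.neg_one_zpow ⟨m-1, by ring⟩
      have h3 : ((-1:ℝ)^k) * ((-1:ℝ)^k) = 1 := by
        rw [← zpow_add₀ (by norm_num : (-1:ℝ) ≠ 0)]
        exact Even.neg_one_zpow ⟨k, rfl⟩
      calc (-1:ℝ)^(2*m-1-k) = (-1:ℝ)^(2*m-1-k) * ((-1:ℝ)^k * (-1:ℝ)^k) := by rw [h3, mul_one]
        _ = ((-1:ℝ)^(2*m-1-k) * (-1:ℝ)^k) * (-1:ℝ)^k := by ring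
        _ = -((-1:ℝ)^k) := by rw [h1, h2]; ring
    have hexp : ((2*m-1-k:ℤ):ℝ)^2 + (1-2*(m:ℝ))*((2*m-1-k:ℤ):ℝ)
        = (k:ℝ)^2 + (1-2*(m:ℝ))*(k:ℝ) := by push_cast; ring
    simp only [hterm, Equiv.subLeft_apply, hexp, hsgn]
    push_cast
    ring
  have h1 : ∑' k, term k = -∑' k, term k := by
    conv_lhs => rw [← hE]
    rw [tsum_congr hneg, tsum_neg]
  have h2 : (2:ℂ) * ∑' k, term k = 0 := by linear_combination h1
  exact (mul_eq_zero.mp h2).resolve_left two_ne_zero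

lemma exp_shift (x y : ℂ) (j : ℤ) (h : x = y + (j:ℂ)*(2*(Real.pi:ℂ)*I)) :
    Complex.exp x = Complex.exp y := by
  rw [h, Complex.exp_add, Complex.exp_int_mul_two_pi_mul_I, mul_one]

lemma key1D (a : ℝ) (ha : 1 < a) (m n : ℤ) :
    ∫ t : ℝ, f1 a t * Complex.exp (-(2*(Real.pi:ℂ)*I*((a*n:ℝ)*t)))
      * ((Real.exp (-(Real.pi*(t-(m:ℝ))^2)) : ℝ) : ℂ) = 0 := by
  have ha0 : 0 < a := by linarith
  have hπ := Real.pi_pos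
  set π := Real.pi with hπdef
  set E : ℝ → ℂ := fun t => Complex.exp (-(2*(π:ℂ)*I*((a*n:ℝ)*t))) with hE
  set ψ : ℝ → ℂ := fun t => ((Real.exp (2*π*m*t - π*m^2) : ℝ) : ℂ) * E t with hψ
  set φ : ℝ → ℂ := fun t => f1 a t * E t * ((Real.exp (-(π*(t-(m:ℝ))^2)) : ℝ) : ℂ) with hφ
  show ∫ t : ℝ, φ t = 0
  have hpt : ∀ t, φ t = ((Wfun a ⌊a*t⌋ : ℝ) : ℂ) * ψ t := by
    intro t
    have h2 : ((Real.exp (π*t^2) :ℝ):ℂ) * ((Real.exp (-(π*(t-(m:ℝ))^2)):ℝ):ℂ)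
        = ((Real.exp (2*π*m*t - π*m^2):ℝ):ℂ) := by
      rw [← ofReal_mul, ← Real.exp_add,
        show π*t^2 + -(π*(t-(m:ℝ))^2) = 2*π*m*t - π*m^2 from by ring]
    simp only [hφ, hψ, f1, ofReal_mul]
    linear_combination (((Wfun a ⌊a*t⌋ : ℝ) : ℂ) * E t) * h2
  have hEnorm : ∀ t, ‖E t‖ = 1 := by
    intro t
    rw [hE, Complex.norm_exp]
    simp
  have hint : Integrable φ := by
    have hb := (aux_integrable_exp π (π*(a-1)) (by nlinarith)).const_mul (Real.exp (π/(4*a)))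
    refine hb.mono' ?_ (Filter.Eventually.of_forall ?_)
    · exact (((measurable_f1 a).mul (by fun_prop)).mul (by fun_prop)).aestronglyMeasurable
    · intro t
      have hG : ‖((Real.exp (-(π*(t-(m:ℝ))^2)) : ℝ) : ℂ)‖ ≤ 1 := by
        rw [Complex.norm_real, Real.norm_eq_abs, abs_of_pos (Real.exp_pos _)]
        exact Real.exp_le_one_iff.2 (by nlinarith [sq_nonneg (t - (m:ℝ))])
      calc ‖φ t‖ = ‖f1 a t‖ * ‖E t‖ * ‖((Real.exp (-(π*(t-(m:ℝ))^2)) : ℝ) : ℂ)‖ := by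
            simp only [hφ, norm_mul]
        _ ≤ ‖f1 a t‖ * 1 * 1 := by
            gcongr
            · exact le_of_eq (hEnorm t)
        _ = ‖f1 a t‖ := by ring
        _ ≤ Real.exp (π/(4*a)) * Real.exp (π * |t| - π*(a-1) * t^2) := f1_bound a ha.le t
  have hmemk : ∀ (k : ℤ), ∀ t ∈ Set.Ico ((k:ℝ)/a) (((k:ℝ)+1)/a), ⌊a*t⌋ = k := by
    intro k t ht
    refine Int.floor_eq_iff.mpr ⟨?_, ?_⟩
    · have := (div_le_iff₀ ha0).mp ht.1; linarith [this]
    · have := (lt_div_iff₀ ha0).mp ht.2; push_cast; linarith [this]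
  have hcover : (⋃ k : ℤ, Set.Ico ((k:ℝ)/a) (((k:ℝ)+1)/a)) = Set.univ := by
    ext t
    simp only [Set.mem_iUnion, Set.mem_univ, iff_true, Set.mem_Ico]
    refine ⟨⌊a*t⌋, ?_, ?_⟩
    · rw [div_le_iff₀ ha0, mul_comm]; exact Int.floor_le _
    · rw [lt_div_iff₀ ha0, mul_comm]; exact Int.lt_floor_add_one _
  have hdisj : Pairwise (Function.onFun Disjoint fun k : ℤ => Set.Ico ((k:ℝ)/a) (((k:ℝ)+1)/a)) := by
    intro i j hij
    refine Set.disjoint_left.mpr fun t hi hj => hij ?_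
    rw [← hmemk i t hi, ← hmemk j t hj]
  have piece : ∀ k : ℤ, ∫ t in Set.Ico ((k:ℝ)/a) (((k:ℝ)+1)/a), φ t
      = ((Wfun a k * Real.exp (2*π*m*k/a) : ℝ) : ℂ) * ∫ s in (0:ℝ)..(1/a), ψ s := by
    intro k
    rw [setIntegral_congr_fun measurableSet_Ico
      (fun t ht => by rw [hpt t, hmemk k t ht] : Set.EqOn φ (fun t => ((Wfun a k : ℝ):ℂ) * ψ t) _)]
    rw [integral_const_mul]
    rw [integral_Ico_eq_integral_Ioo, ← integral_Ioc_eq_integral_Ioo,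
      ← intervalIntegral.integral_of_le ((div_le_div_iff_of_pos_right ha0).mpr (by linarith))]
    have hshift := intervalIntegral.integral_comp_add_right (a := 0) (b := 1/a) ψ ((k:ℝ)/a)
    rw [zero_add] at hshift
    rw [show ((k:ℝ)+1)/a = 1/a + (k:ℝ)/a from by ring, ← hshift]
    have hψs : ∀ s : ℝ, ψ (s + (k:ℝ)/a) = ((Real.exp (2*π*m*k/a) : ℝ) : ℂ) * ψ s := by
      intro s
      simp only [hψ]
      have hre : ((Real.exp (2*π*m*(s + (k:ℝ)/a) - π*m^2) : ℝ) : ℂ)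
          = ((Real.exp (2*π*m*k/a) : ℝ) : ℂ) * ((Real.exp (2*π*m*s - π*m^2) : ℝ) : ℂ) := by
        rw [← ofReal_mul, ← Real.exp_add]
        congr 1
        field_simp
        ring
      have him : E (s + (k:ℝ)/a) = E s := by
        simp only [hE]
        apply exp_shift _ _ (-(n*k))
        have haC : (a:ℂ) ≠ 0 := by exact_mod_cast ha0.ne'
        push_cast
        field_simp
        ring
      rw [hre, him]
      ring
    rw [intervalIntegral.integral_congr (fun s _ => hψs s)]
    rw [intervalIntegral.integral_const_mul, ← mul_assoc, ← ofReal_mul]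
  have hsum : ∑' k : ℤ, ((Wfun a k * Real.exp (2*π*m*k/a) : ℝ) : ℂ) = 0 := by
    have hc : ∀ k : ℤ, ((Wfun a k * Real.exp (2*π*m*k/a) : ℝ) : ℂ)
        = (((-1:ℝ)^k * Real.exp (-(π/a) * ((k:ℝ)^2 + (1-2*(m:ℝ))*(k:ℝ))) : ℝ) : ℂ) := by
      intro k
      have hr : Wfun a k * Real.exp (2*π*m*k/a)
          = (-1:ℝ)^k * Real.exp (-(π/a) * ((k:ℝ)^2 + (1-2*(m:ℝ))*(k:ℝ))) := by
        rw [Wfun, mul_assoc, ← Real.exp_add, ← hπdef]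
        congr 1
        field_simp
        ring
      exact congrArg _ hr
    rw [tsum_congr hc]
    exact tsum_cancel (π/a) m
  calc ∫ t, φ t = ∫ t in Set.univ, φ t := (setIntegral_univ).symm
    _ = ∑' k : ℤ, ∫ t in Set.Ico ((k:ℝ)/a) (((k:ℝ)+1)/a), φ t := by
        rw [← hcover]
        refine integral_iUnion (fun k => measurableSet_Ico) hdisj ?_
        rw [hcover]
        exact hint.integrableOn
    _ = (∑' k : ℤ, ((Wfun a k * Real.exp (2*π*m*k/a) : ℝ) : ℂ)) * ∫ s in (0:ℝ)..(1/a), ψ s := by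
        rw [tsum_congr piece, tsum_mul_right]
    _ = 0 := by rw [hsum, zero_mul]

def g1 : ℝ → ℂ := fun s => (((2:ℝ) ^ ((1:ℝ)/4) * Real.exp (-(Real.pi * (s * s))) : ℝ) : ℂ)

lemma g1_ne_zero (s : ℝ) : g1 s ≠ 0 := by
  simp only [g1, ne_eq, ofReal_eq_zero]
  positivity

lemma measurable_g1 : Measurable g1 := by unfold g1; fun_prop

lemma gaussian_two_factor (t : Fin 2 → ℝ) : gaussian (Fin 2) t = g1 (t 0) * g1 (t 1) := by
  simp only [gaussian, g1, dotR, Fin.sum_univ_two, Fintype.card_fin, ← ofReal_mul]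
  congr 1
  have h1 : ((2:ℝ))^(((2:ℕ):ℝ)/4) = (2:ℝ)^((1:ℝ)/4) * (2:ℝ)^((1:ℝ)/4) := by
    rw [← Real.rpow_add (by norm_num)]; norm_num
  have h2 : Real.exp (-(Real.pi*(t 0 * t 0 + t 1 * t 1)))
      = Real.exp (-(Real.pi * (t 0 * t 0))) * Real.exp (-(Real.pi * (t 1 * t 1))) := by
    rw [← Real.exp_add]; ring_nf
  rw [h1, h2]; ring

lemma integrable_prod_eval (u v : ℝ → ℝ) (hu : Integrable u) (hv : Integrable v) :
    Integrable (fun t : Fin 2 → ℝ => u (t 0) * v (t 1)) := by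
  have h2 : Integrable (fun z : ℝ × ℝ => u z.1 * v z.2)
      (volume.prod volume) := hu.mul_prod hv
  rw [← Measure.volume_eq_prod] at h2
  have h3 := ((volume_preserving_finTwoArrow ℝ).integrable_comp_emb
    (MeasurableEquiv.finTwoArrow).measurableEmbedding).mpr h2
  simpa [Function.comp_def, MeasurableEquiv.finTwoArrow] using h3

lemma coef_factor (φ ψ : ℝ → ℂ) (x ω : Fin 2 → ℝ) :
    gaborCoef (fun t => φ (t 0) * ψ (t 1)) (gaussian (Fin 2)) x ω
      = (∫ s : ℝ, φ s * (starRingEnd ℂ)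
            (Complex.exp (2*(Real.pi:ℂ)*I*((ω 0 * s : ℝ):ℂ)) * g1 (s - x 0)))
      * (∫ s : ℝ, ψ s * (starRingEnd ℂ)
            (Complex.exp (2*(Real.pi:ℂ)*I*((ω 1 * s : ℝ):ℂ)) * g1 (s - x 1))) := by
  set Φ : ℝ → ℂ := fun s => φ s * (starRingEnd ℂ)
      (Complex.exp (2*(Real.pi:ℂ)*I*((ω 0 * s : ℝ):ℂ)) * g1 (s - x 0)) with hΦ
  set Ψ : ℝ → ℂ := fun s => ψ s * (starRingEnd ℂ)
      (Complex.exp (2*(Real.pi:ℂ)*I*((ω 1 * s : ℝ):ℂ)) * g1 (s - x 1)) with hΨ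
  have key : ∀ t : Fin 2 → ℝ,
      (φ (t 0) * ψ (t 1)) * (starRingEnd ℂ) (tfShift x ω (gaussian (Fin 2)) t)
        = Φ (t 0) * Ψ (t 1) := by
    intro t
    have hg : gaussian (Fin 2) (t - x) = g1 (t 0 - x 0) * g1 (t 1 - x 1) := by
      rw [gaussian_two_factor]; simp [Pi.sub_apply]
    have hd : (dotR ω t : ℝ) = ω 0 * t 0 + ω 1 * t 1 := by
      simp [dotR, Fin.sum_univ_two]
    have he : Complex.exp (2 * (Real.pi:ℂ) * Complex.I * ((dotR ω t : ℝ):ℂ))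
        = Complex.exp (2*(Real.pi:ℂ)*I*((ω 0 * t 0 : ℝ):ℂ))
          * Complex.exp (2*(Real.pi:ℂ)*I*((ω 1 * t 1 : ℝ):ℂ)) := by
      rw [← Complex.exp_add, hd]
      push_cast
      ring_nf
    simp only [tfShift, hΦ, hΨ, hg, he, map_mul]
    ring
  rw [gaborCoef]
  rw [integral_congr_ae (Filter.Eventually.of_forall key)]
  have h4 : ∫ t : Fin 2 → ℝ, Φ (t 0) * Ψ (t 1)
      = ∫ z : ℝ × ℝ, Φ z.1 * Ψ z.2 := by
    rw [← (volume_preserving_finTwoArrow ℝ).integral_comp'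
      (f := MeasurableEquiv.finTwoArrow) (fun z : ℝ × ℝ => Φ z.1 * Ψ z.2)]
    simp [MeasurableEquiv.finTwoArrow]
  rw [h4, Measure.volume_eq_prod, integral_prod_mul]

lemma A_vanish (a : ℝ) (ha : 1 < a) (m n : ℤ) :
    ∫ s : ℝ, f1 a s * (starRingEnd ℂ)
      (Complex.exp (2*(Real.pi:ℂ)*I*((a * (n:ℝ) * s : ℝ):ℂ)) * g1 (s - (m:ℝ))) = 0 := by
  have hpoint : ∀ s : ℝ, f1 a s * (starRingEnd ℂ)
      (Complex.exp (2*(Real.pi:ℂ)*I*((a * (n:ℝ) * s : ℝ):ℂ)) * g1 (s - (m:ℝ)))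
      = (((2:ℝ)^((1:ℝ)/4) : ℝ):ℂ) * (f1 a s * Complex.exp (-(2*(Real.pi:ℂ)*I*((a*n:ℝ)*s)))
          * ((Real.exp (-(Real.pi*(s-(m:ℝ))^2)) : ℝ) : ℂ)) := by
    intro s
    rw [map_mul, ← Complex.exp_conj]
    have hconj : (starRingEnd ℂ) (2*(Real.pi:ℂ)*I*((a * (n:ℝ) * s : ℝ):ℂ))
        = -(2*(Real.pi:ℂ)*I*(((a*(n:ℝ) : ℝ)):ℂ)*(s:ℂ)) := by
      simp only [map_mul, Complex.conj_I, Complex.conj_ofReal, map_ofNat]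
      push_cast
      ring
    rw [hconj]
    have hg : (starRingEnd ℂ) (g1 (s - (m:ℝ)))
        = (((2:ℝ)^((1:ℝ)/4):ℝ):ℂ) * ((Real.exp (-(Real.pi*(s-(m:ℝ))^2)) : ℝ) : ℂ) := by
      rw [g1, Complex.conj_ofReal, ofReal_mul]
      congr 2
      ring
    rw [hg]
    ring
  simp only [hpoint]
  rw [integral_const_mul, key1D a ha m n, mul_zero]

lemma memL2_pair (u v : ℝ → ℂ) (hu : Measurable u) (hv : Measurable v)
    (hU : Integrable (fun s => ‖u s‖^2)) (hV : Integrable (fun s => ‖v s‖^2)) :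
    MemLp (fun t : Fin 2 → ℝ => u (t 0) * v (t 1)) 2 volume := by
  have hmeas : AEStronglyMeasurable (fun t : Fin 2 → ℝ => u (t 0) * v (t 1)) volume :=
    ((hu.comp (measurable_pi_apply 0)).mul (hv.comp (measurable_pi_apply 1))).aestronglyMeasurable
  rw [memLp_two_iff_integrable_sq_norm hmeas]
  have heq : (fun t : Fin 2 → ℝ => ‖u (t 0) * v (t 1)‖^2)
      = fun t : Fin 2 → ℝ => (fun s => ‖u s‖^2) (t 0) * (fun s => ‖v s‖^2) (t 1) := by
    funext t
    simp [norm_mul, mul_pow]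
  rw [heq]
  exact integrable_prod_eval _ _ hU hV

lemma sq_norm_f1_integrable (a : ℝ) (ha : 1 < a) :
    Integrable (fun s : ℝ => ‖f1 a s‖^2) := by
  have hπ := Real.pi_pos
  have hb := (aux_integrable_exp (2*Real.pi) (2*Real.pi*(a-1))
    (by nlinarith)).const_mul ((Real.exp (Real.pi/(4*a)))^2)
  refine hb.mono' ((measurable_f1 a).norm.pow_const 2).aestronglyMeasurable
    (Filter.Eventually.of_forall fun t => ?_)
  have hb1 := f1_bound a ha.le t
  have h0 : ‖‖f1 a t‖^2‖ = ‖f1 a t‖^2 := by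
    rw [Real.norm_eq_abs, _root_.abs_of_nonneg (by positivity)]
  rw [h0]
  calc ‖f1 a t‖^2 ≤ (Real.exp (Real.pi/(4*a))
        * Real.exp (Real.pi * |t| - Real.pi*(a-1) * t^2))^2 :=
      pow_le_pow_left₀ (norm_nonneg _) hb1 2
    _ = (Real.exp (Real.pi/(4*a)))^2
        * Real.exp (2*Real.pi * |t| - 2*Real.pi*(a-1) * t^2) := by
      have hsq : Real.exp (Real.pi*|t| - Real.pi*(a-1)*t^2) ^ 2
          = Real.exp (2*Real.pi*|t| - 2*Real.pi*(a-1)*t^2) := by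
        rw [sq, ← Real.exp_add]; congr 1; ring
      rw [mul_pow, hsq]

lemma sq_norm_g1_integrable : Integrable (fun s : ℝ => ‖g1 s‖^2) := by
  have hπ := Real.pi_pos
  have hb := (aux_integrable_exp 0 Real.pi hπ).const_mul 4
  refine hb.mono' (measurable_g1.norm.pow_const 2).aestronglyMeasurable
    (Filter.Eventually.of_forall fun s => ?_)
  have h0 : ‖‖g1 s‖^2‖ = ‖g1 s‖^2 := by
    rw [Real.norm_eq_abs, _root_.abs_of_nonneg (by positivity)]
  rw [h0]
  have hgn : ‖g1 s‖ = (2:ℝ)^((1:ℝ)/4) * Real.exp (-(Real.pi * (s * s))) := by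
    rw [g1, Complex.norm_real, Real.norm_eq_abs, abs_of_pos (by positivity)]
  rw [hgn]
  have h14 : ((2:ℝ)^((1:ℝ)/4))^2 ≤ 4 := by
    have h2 : (2:ℝ)^((1:ℝ)/4) ≤ (2:ℝ)^((1:ℝ)) :=
      Real.rpow_le_rpow_of_exponent_le (by norm_num) (by norm_num)
    rw [Real.rpow_one] at h2
    nlinarith [Real.rpow_nonneg (by norm_num : (0:ℝ) ≤ 2) ((1:ℝ)/4)]
  have hexp : (Real.exp (-(Real.pi * (s * s))))^2 ≤ Real.exp (0 * |s| - Real.pi * s^2) := by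
    rw [sq, ← Real.exp_add]
    apply Real.exp_le_exp.2
    nlinarith [sq_nonneg s]
  calc ((2:ℝ)^((1:ℝ)/4) * Real.exp (-(Real.pi * (s * s))))^2
      = ((2:ℝ)^((1:ℝ)/4))^2 * (Real.exp (-(Real.pi * (s * s))))^2 := by ring
    _ ≤ 4 * Real.exp (0 * |s| - Real.pi * s^2) := by
        apply mul_le_mul h14 hexp (by positivity) (by norm_num)

lemma not_ae_zero (F : (Fin 2 → ℝ) → ℂ) (h : ∀ t, F t ≠ 0) : ¬ (F =ᵐ[volume] 0) := by
  intro hae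
  have hfalse : ∀ᵐ t : (Fin 2 → ℝ) ∂volume, False := hae.mono fun t ht => h t ht
  rw [Filter.eventually_false_iff_eq_bot, ae_eq_bot] at hfalse
  have hvol : (volume : Measure (Fin 2 → ℝ)) Set.univ ≠ 0 :=
    (isOpen_univ.measure_ne_zero volume ⟨0, trivial⟩)
  rw [hfalse] at hvol
  exact hvol rfl

/-- if `a > 1` or `b > 1`, the Gaussian Gabor system over
`ℤ² × (aℤ × bℤ)` is incomplete in `L²(ℝ²)`. -/
theorem gaussian_incomplete_separable_lattice (a b : ℝ)
    (ha0 : 0 < a) (hb0 : 0 < b) (hab : 1 < a ∨ 1 < b) :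
    ∃ F : (Fin 2 → ℝ) → ℂ, MemLp F 2 volume ∧ ¬ (F =ᵐ[volume] 0) ∧
      ∀ lam ∈ {p : (Fin 2 → ℝ) × (Fin 2 → ℝ) | ∃ m₁ m₂ n₁ n₂ : ℤ,
          p = (![(m₁ : ℝ), (m₂ : ℝ)], ![a * (n₁ : ℝ), b * (n₂ : ℝ)])},
        gaborCoef F (gaussian (Fin 2)) lam.1 lam.2 = 0 := by
  rcases hab with hA | hB
  · refine ⟨fun t => f1 a (t 0) * g1 (t 1),
      memL2_pair _ _ (measurable_f1 a) measurable_g1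
        (sq_norm_f1_integrable a hA) sq_norm_g1_integrable,
      not_ae_zero _ (fun t => mul_ne_zero (f1_ne_zero a _) (g1_ne_zero _)), ?_⟩
    rintro ⟨x, ω⟩ ⟨m₁, m₂, n₁, n₂, hp⟩
    rw [Prod.mk.injEq] at hp
    obtain ⟨hx, hω⟩ := hp
    subst hx; subst hω
    rw [coef_factor (f1 a) g1]
    simp only [Matrix.cons_val_zero, Matrix.cons_val_one, Matrix.head_cons]
    rw [A_vanish a hA m₁ n₁, zero_mul]
  · refine ⟨fun t => g1 (t 0) * f1 b (t 1),
      memL2_pair _ _ measurable_g1 (measurable_f1 b)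
        sq_norm_g1_integrable (sq_norm_f1_integrable b hB),
      not_ae_zero _ (fun t => mul_ne_zero (g1_ne_zero _) (f1_ne_zero b _)), ?_⟩
    rintro ⟨x, ω⟩ ⟨m₁, m₂, n₁, n₂, hp⟩
    rw [Prod.mk.injEq] at hp
    obtain ⟨hx, hω⟩ := hp
    subst hx; subst hω
    rw [coef_factor g1 (f1 b)]
    simp only [Matrix.cons_val_zero, Matrix.cons_val_one, Matrix.head_cons]
    rw [A_vanish b hB m₂ n₂, mul_zero]
end
end

section
/- Let a > 1/2 and b > 1/2, and let Λ = {(m₁, m₂, a(n₁ + n₂), b(n₂ − n₁)) : m₁, m₂, n₁, n₂ ∈ ℤ} ⊂ ℝ² × ℝ². Then the Gabor system (g₂, Λ) is incomplete in L²(ℝ²): there exists a nonzero F ∈ L²(ℝ²) with ⟨F, π(λ)g₂⟩ = 0 for all λ ∈ Λ. -/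
open MeasureTheory Complex

noncomputable section

/-! ### Auxiliary development -/


section Aux

open scoped Real

/-- Summability of Gaussian-type series over `ℤ`. -/
lemma summable_exp_quad (A B : ℝ) (hA : 0 < A) :
    Summable fun k : ℤ => Real.exp (-A * k ^ 2 + B * k) := by
  have key : ∀ C : ℝ, Summable fun n : ℕ => Real.exp (-A * n ^ 2 + C * n) := by
    intro C
    apply summable_of_ratio_norm_eventually_le (r := Real.exp (-1)) (by
      rw [Real.exp_lt_one_iff]; norm_num)
    filter_upwards [Filter.eventually_ge_atTop (Nat.ceil ((C + 1) / (2 * A)))] with n hn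
    have hn' : (C + 1) / (2 * A) ≤ n := le_trans (Nat.le_ceil _) (by exact_mod_cast hn)
    have h2A : (0:ℝ) < 2 * A := by linarith
    have hlin : C + 1 ≤ 2 * A * n := by rw [div_le_iff₀ h2A] at hn'; linarith
    rw [Real.norm_eq_abs, Real.norm_eq_abs, abs_of_pos (Real.exp_pos _),
      abs_of_pos (Real.exp_pos _), ← Real.exp_add, Real.exp_le_exp]
    have hsq : ((n:ℝ) + 1) ^ 2 = (n:ℝ)^2 + 2*(n:ℝ) + 1 := by ring
    push_cast
    rw [hsq]
    nlinarith [hA]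
  apply Summable.of_nat_of_neg
  · exact (key B).congr (fun n => by push_cast; ring_nf)
  · exact (key (-B)).congr (fun n => by push_cast; ring_nf)

/-- The theta coefficients. -/
def dcoef (c Q : ℝ) (k : ℤ) : ℝ :=
  (-1 : ℝ) ^ k * Real.exp (Real.pi * (Q - c) * k ^ 2 - Real.pi * c * k)

lemma abs_dcoef (c Q : ℝ) (k : ℤ) :
    |dcoef c Q k| = Real.exp (Real.pi * (Q - c) * k ^ 2 - Real.pi * c * k) := by
  have h1 : |(-1 : ℝ) ^ k| = 1 := by
    have hk : ((-1:ℝ) ^ k) * ((-1:ℝ) ^ k) = 1 := by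
      rw [← zpow_add₀ (by norm_num : (-1:ℝ) ≠ 0)]
      have : k + k = 2 * k := by ring
      rw [this, zpow_mul]; norm_num
    rcases mul_self_eq_one_iff.mp hk with h | h <;> rw [h] <;> norm_num
  rw [dcoef, abs_mul, h1, one_mul, abs_of_pos (Real.exp_pos _)]

lemma summable_abs_dcoef {c Q : ℝ} (h : Q < c) :
    Summable fun k : ℤ => |dcoef c Q k| := by
  have h0 : 0 < Real.pi * (c - Q) := by have := Real.pi_pos; nlinarith
  have := summable_exp_quad (Real.pi * (c - Q)) (-(Real.pi * c)) h0
  apply this.congr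
  intro k
  rw [abs_dcoef]
  congr 1
  ring

lemma summable_dcoef {c Q : ℝ} (h : Q < c) :
    Summable fun k : ℤ => dcoef c Q k :=
  summable_abs_dcoef h |>.of_abs

lemma neg_one_zpow_pair (n k : ℤ) : (-1 : ℝ) ^ (2 * n - 1 - k) = -(-1 : ℝ) ^ k := by
  have h : (-1 : ℝ) ^ (2 * n - 1 - k) * (-1 : ℝ) ^ k = (-1 : ℝ) ^ (2 * n - 1) := by
    rw [← zpow_add₀ (by norm_num : (-1:ℝ) ≠ 0)]; ring_nf
  have h2 : (-1 : ℝ) ^ (2 * n - 1) = -1 := by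
    rw [sub_eq_add_neg, zpow_add₀ (by norm_num : (-1:ℝ) ≠ 0), zpow_mul]
    norm_num
  have hk : (-1 : ℝ) ^ k * (-1 : ℝ) ^ k = 1 := by
    rw [← zpow_add₀ (by norm_num : (-1:ℝ) ≠ 0)]
    have : k + k = 2 * k := by ring
    rw [this, zpow_mul]; norm_num
  have := congrArg (· * (-1:ℝ) ^ k) h
  rw [mul_assoc, hk, mul_one, h2] at this
  rw [this]; ring

/-- The key vanishing sum, by the pairing `k ↦ 2n - 1 - k`. -/
lemma Ssum (c Q : ℝ) (hQpos : 0 < Q) (n : ℤ) :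
    ∑' k : ℤ, dcoef c Q k * Real.exp (-(Real.pi / Q) * (Q * k - c * n) ^ 2) = 0 := by
  set f : ℤ → ℝ := fun k => dcoef c Q k * Real.exp (-(Real.pi / Q) * (Q * k - c * n) ^ 2)
    with hf
  have hfk : ∀ j : ℤ, f j = (-1:ℝ)^j * Real.exp (Real.pi * (Q - c) * (j:ℝ) ^ 2
      - Real.pi * c * (j:ℝ) + (-(Real.pi / Q) * (Q * (j:ℝ) - c * (n:ℝ)) ^ 2)) := by
    intro j
    simp only [hf, dcoef, mul_assoc, ← Real.exp_add]
  have key : ∀ k : ℤ, f (2 * n - 1 - k) = -f k := by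
    intro k
    have hexp : Real.pi * (Q - c) * ((2*n-1-k:ℤ):ℝ) ^ 2 - Real.pi * c * ((2*n-1-k:ℤ):ℝ)
        + (-(Real.pi / Q) * (Q * ((2*n-1-k:ℤ):ℝ) - c * n) ^ 2)
        = Real.pi * (Q - c) * (k:ℝ) ^ 2 - Real.pi * c * (k:ℝ)
        + (-(Real.pi / Q) * (Q * (k:ℝ) - c * n) ^ 2) := by
      have hQ0 : Q ≠ 0 := ne_of_gt hQpos
      push_cast
      field_simp
      ring
    rw [hfk, hfk, hexp, neg_one_zpow_pair n k]
    ring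
  have h1 : ∑' k, f k = ∑' k, f (2 * n - 1 - k) :=
    ((Equiv.subLeft (2 * n - 1)).tsum_eq f).symm
  have h2 : ∑' k, f (2 * n - 1 - k) = -∑' k, f k := by
    simp_rw [key]
    exact tsum_neg
  have := h1.trans h2
  linarith

/-- One term of the 1D window function. -/
def Uterm (c Q : ℝ) (k : ℤ) (t : ℝ) : ℂ :=
  (dcoef c Q k : ℂ) * Complex.exp (2 * Real.pi * Complex.I * Q * k * t)
    * ((Real.exp (-(Real.pi * (Q - 1) * t ^ 2)) : ℝ) : ℂ)

/-- The 1D window function. -/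
def Uf (c Q : ℝ) (t : ℝ) : ℂ := ∑' k : ℤ, Uterm c Q k t

lemma norm_Uterm (c Q : ℝ) (k : ℤ) (t : ℝ) :
    ‖Uterm c Q k t‖ = |dcoef c Q k| * Real.exp (-(Real.pi * (Q - 1) * t ^ 2)) := by
  rw [Uterm, norm_mul, norm_mul]
  have h1 : ‖((dcoef c Q k : ℝ) : ℂ)‖ = |dcoef c Q k| := by
    rw [Complex.norm_real]; rfl
  have h2 : ‖Complex.exp (2 * Real.pi * Complex.I * Q * k * t)‖ = 1 := by
    have : (2 * (Real.pi:ℂ) * Complex.I * Q * k * t)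
        = ((2 * Real.pi * Q * k * t : ℝ) : ℂ) * Complex.I := by push_cast; ring
    rw [this]
    exact Complex.norm_exp_ofReal_mul_I _
  have h3 : ‖((Real.exp (-(Real.pi * (Q - 1) * t ^ 2)) : ℝ) : ℂ)‖
      = Real.exp (-(Real.pi * (Q - 1) * t ^ 2)) := by
    rw [Complex.norm_real, Real.norm_eq_abs, abs_of_pos (Real.exp_pos _)]
  rw [h1, h2, h3]; ring

lemma continuous_Uf {c Q : ℝ} (hQ1 : 1 ≤ Q) (h : Q < c) : Continuous (Uf c Q) := by
  apply continuous_tsum (f := fun k t => Uterm c Q k t)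
    (u := fun k => |dcoef c Q k|)
  · intro k
    apply Continuous.mul
    apply Continuous.mul
    · exact continuous_const
    · exact Complex.continuous_exp.comp (by continuity)
    · exact Complex.continuous_ofReal.comp (Real.continuous_exp.comp (by continuity))
  · exact summable_abs_dcoef h
  · intro k t
    rw [norm_Uterm]
    have : Real.exp (-(Real.pi * (Q - 1) * t ^ 2)) ≤ 1 := by
      rw [Real.exp_le_one_iff]
      have h1 : (0:ℝ) ≤ Real.pi * (Q - 1) * t ^ 2 :=
        mul_nonneg (mul_nonneg Real.pi_pos.le (by linarith)) (sq_nonneg t)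
      linarith
    nlinarith [abs_nonneg (dcoef c Q k), Real.exp_pos (-(Real.pi * (Q - 1) * t ^ 2))]

lemma norm_Uf_le {c Q : ℝ} (h : Q < c) (t : ℝ) :
    ‖Uf c Q t‖ ≤ (∑' k : ℤ, |dcoef c Q k|) * Real.exp (-(Real.pi * (Q - 1) * t ^ 2)) := by
  rw [Uf]
  refine le_trans (norm_tsum_le_tsum_norm ?_) ?_
  · apply Summable.congr ((summable_abs_dcoef h).mul_right
      (Real.exp (-(Real.pi * (Q - 1) * t ^ 2))))
    intro k
    rw [norm_Uterm]
  · rw [← tsum_mul_right]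
    apply le_of_eq
    congr 1
    funext k
    rw [norm_Uterm]



lemma oneD {c Q : ℝ} (hQ1 : 1 < Q) (hQc : Q < c) (m n : ℤ) :
    ∫ t : ℝ, Uf c Q t * (Complex.exp (-(2 * (Real.pi:ℂ) * Complex.I * ((c:ℂ) * (n:ℂ)) * t))
      * ((Real.exp (-(Real.pi * (t - m) ^ 2)) : ℝ) : ℂ)) = 0 := by
  have hπ := Real.pi_pos
  have hQ0 : (0:ℝ) < Q := by linarith
  set b : ℂ := ((Real.pi * Q : ℝ) : ℂ) with hbdef
  have hbre : 0 < b.re := by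
    rw [hbdef, Complex.ofReal_re]
    positivity
  set τ : ℤ → ℂ := fun k => ((2*Real.pi*(Q*k - c*n) : ℝ) : ℂ) - ((2*Real.pi*m : ℝ):ℂ)*Complex.I
    with hτdef
  set g : ℤ → ℝ → ℂ := fun k t => Uterm c Q k t
      * (Complex.exp (-(2 * (Real.pi:ℂ) * Complex.I * ((c:ℂ) * (n:ℂ)) * t))
        * ((Real.exp (-(Real.pi * (t - m) ^ 2)) : ℝ) : ℂ)) with hgdef
  set Ck : ℤ → ℂ := fun k => (dcoef c Q k : ℂ)
      * Complex.exp (((-(Real.pi * (m:ℝ)^2) : ℝ) : ℂ)) with hCkdef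
  -- Step A : pointwise representation
  have stepA : ∀ k t, g k t = Ck k * (Complex.exp (Complex.I * τ k * t)
      * Complex.exp (-b * (t:ℂ)^2)) := by
    intro k t
    simp only [hgdef, hCkdef, hτdef, Uterm, hbdef, Complex.ofReal_exp, mul_assoc,
      ← Complex.exp_add]
    congr 2
    push_cast
    ring_nf
    simp only [Complex.I_sq]
    ring
  -- Step B : integrability
  have stepB : ∀ k, Integrable (g k) := by
    intro k
    have : Integrable (fun t : ℝ => Ck k * (Complex.exp (Complex.I * τ k * t)
        * Complex.exp (-b * (t:ℂ)^2))) := by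
      apply Integrable.const_mul
      have h2 := (integrable_cexp_quadratic hbre (Complex.I * τ k) 0)
      apply h2.congr
      filter_upwards with t
      rw [← Complex.exp_add]
      congr 1
      ring
    exact this.congr (Filter.Eventually.of_forall fun t => (stepA k t).symm)
  -- Step C : value of each integral
  have stepC : ∀ k, ∫ t : ℝ, g k t
      = Ck k * (((Real.pi:ℂ)/b) ^ ((1:ℂ)/2) * Complex.exp (-(τ k)^2/(4*b))) := by
    intro k
    rw [MeasureTheory.integral_congr_ae (Filter.Eventually.of_forall (stepA k)),
      MeasureTheory.integral_const_mul, fourierIntegral_gaussian hbre (τ k)]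
  -- T k
  set T : ℤ → ℝ := fun k => dcoef c Q k * Real.exp (-(Real.pi/Q) * (Q*k - c*n)^2) with hTdef
  set K : ℂ := Complex.exp (((-(Real.pi * (m:ℝ)^2) : ℝ) : ℂ)) * ((Real.pi:ℂ)/b) ^ ((1:ℂ)/2)
      * Complex.exp (((Real.pi*(m:ℝ)^2/Q : ℝ) : ℂ) - ((2*Real.pi*m*c*n/Q : ℝ) : ℂ)*Complex.I)
    with hKdef
  -- Step D : rewrite each integral as K * T k
  have stepD : ∀ k, ∫ t : ℝ, g k t = K * (T k : ℂ) := by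
    intro k
    rw [stepC k]
    have h1 : Complex.exp (((m*k : ℤ) : ℂ) * (2*(Real.pi:ℂ)*Complex.I)) = 1 :=
      Complex.exp_int_mul_two_pi_mul_I _
    have hexp : -(τ k)^2/(4*b)
        = (((Real.pi*(m:ℝ)^2/Q : ℝ) : ℂ) - ((2*Real.pi*m*c*n/Q : ℝ) : ℂ)*Complex.I)
          + ((-(Real.pi/Q) * (Q*(k:ℝ) - c*(n:ℝ))^2 : ℝ) : ℂ)
          + ((m*k : ℤ) : ℂ) * (2*(Real.pi:ℂ)*Complex.I) := by
      have hQ' : (Q:ℂ) ≠ 0 := by exact_mod_cast ne_of_gt hQ0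
      have hπ' : ((Real.pi : ℝ):ℂ) ≠ 0 := by exact_mod_cast ne_of_gt hπ
      rw [hτdef, hbdef]
      push_cast
      field_simp
      ring_nf
      simp only [Complex.I_sq]
      ring
    rw [hexp, Complex.exp_add, Complex.exp_add, h1, mul_one, hKdef, hCkdef, hTdef]
    push_cast [Complex.ofReal_exp]
    ring
  -- Step E : summability of norms of integrals
  have hnormg : ∀ k t, ‖g k t‖ = |dcoef c Q k| * Real.exp (-(Real.pi * (Q - 1) * t ^ 2))
      * Real.exp (-(Real.pi * (t - m) ^ 2)) := by
    intro k t
    rw [hgdef]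
    simp only [norm_mul, norm_Uterm]
    have h2 : ‖Complex.exp (-(2 * (Real.pi:ℂ) * Complex.I * ((c:ℂ) * (n:ℂ)) * t))‖ = 1 := by
      have : (-(2 * (Real.pi:ℂ) * Complex.I * ((c:ℂ) * (n:ℂ)) * t))
          = ((-(2 * Real.pi * (c * n) * t) : ℝ) : ℂ) * Complex.I := by push_cast; ring
      rw [this]
      exact Complex.norm_exp_ofReal_mul_I _
    rw [h2]
    rw [Complex.norm_real, Real.norm_eq_abs, abs_of_pos (Real.exp_pos _)]
    ring
  have stepE : Summable fun k => ∫ t : ℝ, ‖g k t‖ := by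
    have hIbound : ∀ k, ∫ t : ℝ, ‖g k t‖
        ≤ |dcoef c Q k| * ∫ t : ℝ, Real.exp (-(Real.pi * (Q-1)) * t ^ 2) := by
      intro k
      rw [← MeasureTheory.integral_const_mul]
      refine MeasureTheory.integral_mono ((stepB k).norm)
        ((integrable_exp_neg_mul_sq (by nlinarith : (0:ℝ) < Real.pi * (Q-1))).const_mul _) ?_
      intro t
      dsimp only
      · rw [hnormg k t]
        have h1 : Real.exp (-(Real.pi * (t - m) ^ 2)) ≤ 1 := by
          rw [Real.exp_le_one_iff]
          have : (0:ℝ) ≤ Real.pi * (t - m)^2 := by positivity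
          linarith
        have h2 : (0:ℝ) ≤ |dcoef c Q k| * Real.exp (-(Real.pi * (Q - 1) * t ^ 2)) := by
          positivity
        calc |dcoef c Q k| * Real.exp (-(Real.pi * (Q - 1) * t ^ 2))
              * Real.exp (-(Real.pi * (t - m) ^ 2))
            ≤ |dcoef c Q k| * Real.exp (-(Real.pi * (Q - 1) * t ^ 2)) * 1 := by
              exact mul_le_mul_of_nonneg_left h1 h2
          _ = |dcoef c Q k| * Real.exp (-(Real.pi * (Q-1)) * t ^ 2) := by
              rw [mul_one]; ring_nf
    apply Summable.of_nonneg_of_le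
      (fun k => MeasureTheory.integral_nonneg (fun t => norm_nonneg _)) hIbound
    exact (summable_abs_dcoef hQc).mul_right _
  -- Step F : assemble
  have hpt : ∀ t : ℝ, Uf c Q t * (Complex.exp (-(2 * (Real.pi:ℂ) * Complex.I
      * ((c:ℂ) * (n:ℂ)) * t)) * ((Real.exp (-(Real.pi * (t - m) ^ 2)) : ℝ) : ℂ))
      = ∑' k : ℤ, g k t := by
    intro t
    rw [Uf, ← tsum_mul_right]
  rw [MeasureTheory.integral_congr_ae (Filter.Eventually.of_forall hpt),
    ← MeasureTheory.integral_tsum_of_summable_integral_norm stepB stepE]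
  have : ∀ k : ℤ, ∫ t, g k t = K * (T k : ℂ) := stepD
  rw [tsum_congr this, tsum_mul_left, ← Complex.ofReal_tsum, Ssum c Q hQ0 n]
  simp

lemma Uf_ne_zero {c Q : ℝ} (hQ1 : 1 < Q) (hQc : Q < c) : ∃ t : ℝ, Uf c Q t ≠ 0 := by
  by_contra hcon
  push_neg at hcon
  have hπ := Real.pi_pos
  have hQ0 : (0:ℝ) < Q := by linarith
  set s : Set ℝ := Set.Ioc (0:ℝ) (1/Q) with hsdef
  set F : ℤ → ℝ → ℂ := fun k t => (dcoef c Q k : ℂ)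
      * Complex.exp (2 * Real.pi * Complex.I * Q * k * t) with hFdef
  set w : ℝ → ℂ := fun t => ((Real.exp (Real.pi * (Q - 1) * t ^ 2) : ℝ) : ℂ) with hwdef
  have hpt : ∀ t : ℝ, Uf c Q t * w t = ∑' k : ℤ, F k t := by
    intro t
    rw [Uf, ← tsum_mul_right]
    congr 1
    funext k
    rw [Uterm, hFdef, hwdef]
    simp only [mul_assoc]
    congr 1
    congr 1
    rw [← Complex.ofReal_mul, ← Real.exp_add]
    norm_num
  have hFcont : ∀ k : ℤ, Continuous (F k) := by
    intro k
    exact continuous_const.mul (Complex.continuous_exp.comp (by continuity))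
  have hFint : ∀ k : ℤ, Integrable (F k) (volume.restrict s) := by
    intro k
    have : IntegrableOn (F k) (Set.Icc (0:ℝ) (1/Q)) volume :=
      ((hFcont k).integrableOn_Icc)
    exact this.mono_set Set.Ioc_subset_Icc_self
  have hnormF : ∀ k t, ‖F k t‖ = |dcoef c Q k| := by
    intro k t
    rw [hFdef]
    simp only [norm_mul]
    have h2 : ‖Complex.exp (2 * Real.pi * Complex.I * Q * k * t)‖ = 1 := by
      have : (2 * (Real.pi:ℂ) * Complex.I * Q * k * t)
          = ((2 * Real.pi * Q * k * t : ℝ) : ℂ) * Complex.I := by push_cast; ring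
      rw [this]
      exact Complex.norm_exp_ofReal_mul_I _
    rw [h2, Complex.norm_real]
    simp [Real.norm_eq_abs]
  have hvol : (volume.restrict s) Set.univ < ⊤ := by
    rw [Measure.restrict_apply_univ]
    exact measure_Ioc_lt_top
  have hFsum : Summable fun k : ℤ => ∫ t, ‖F k t‖ ∂(volume.restrict s) := by
    have : ∀ k : ℤ, ∫ t, ‖F k t‖ ∂(volume.restrict s)
        = ((volume.restrict s) Set.univ).toReal * |dcoef c Q k| := by
      intro k
      rw [integral_congr_ae (Filter.Eventually.of_forall (hnormF k))]
      rw [integral_const]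
      simp [smul_eq_mul, measureReal_def]
    rw [funext this]
    exact (summable_abs_dcoef hQc).mul_left _
  have hzero : ∫ t, (∑' k : ℤ, F k t) ∂(volume.restrict s) = 0 := by
    rw [← integral_congr_ae (Filter.Eventually.of_forall hpt)]
    have : ∀ t : ℝ, Uf c Q t * w t = 0 := fun t => by rw [hcon t, zero_mul]
    rw [integral_congr_ae (Filter.Eventually.of_forall this)]
    simp
  have hswap := MeasureTheory.integral_tsum_of_summable_integral_norm hFint hFsum
  rw [hzero] at hswap
  -- compute each integral
  have hval : ∀ k : ℤ, ∫ t, F k t ∂(volume.restrict s)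
      = if k = 0 then ((1/Q : ℝ) : ℂ) * (dcoef c Q 0 : ℂ) else 0 := by
    intro k
    have hle : (0:ℝ) ≤ 1/Q := by positivity
    have hIoc : ∫ t, F k t ∂(volume.restrict s) = ∫ t in (0:ℝ)..(1/Q), F k t := by
      rw [intervalIntegral.integral_of_le hle]
    by_cases hk : k = 0
    · subst hk
      rw [hIoc]
      simp only [hFdef]
      have : ∀ t : ℝ, (dcoef c Q 0 : ℂ)
          * Complex.exp (2 * Real.pi * Complex.I * Q * (0:ℤ) * t) = (dcoef c Q 0 : ℂ) := by
        intro t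
        norm_num
      rw [intervalIntegral.integral_congr (fun t _ => this t)]
      rw [intervalIntegral.integral_const]
      simp [smul_eq_mul]
    · rw [hIoc]
      simp only [hFdef]
      rw [intervalIntegral.integral_const_mul]
      have hc0 : (2 * (Real.pi:ℂ) * Complex.I * Q * k) ≠ 0 := by
        simp only [ne_eq, mul_eq_zero]
        push_neg
        refine ⟨⟨⟨⟨by norm_num, ?_⟩, Complex.I_ne_zero⟩, ?_⟩, ?_⟩
        · exact_mod_cast ne_of_gt hπ
        · exact_mod_cast ne_of_gt hQ0
        · exact_mod_cast hk
      have : ∀ t : ℝ, Complex.exp (2 * Real.pi * Complex.I * Q * k * t)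
          = Complex.exp ((2 * Real.pi * Complex.I * Q * k) * t) := by
        intro t; ring_nf
      rw [intervalIntegral.integral_congr (fun t _ => this t)]
      rw [integral_exp_mul_complex hc0]
      have he1 : (2 * (Real.pi:ℂ) * Complex.I * Q * k) * ((1/Q : ℝ) : ℂ)
          = (k : ℂ) * (2 * Real.pi * Complex.I) := by
        have hQne : (Q:ℂ) ≠ 0 := by exact_mod_cast ne_of_gt hQ0
        push_cast
        field_simp
      rw [he1, Complex.exp_int_mul_two_pi_mul_I]
      norm_num
      simp [hk]
  rw [tsum_congr hval] at hswap
  rw [tsum_eq_single 0 (by intro k hk; simp [hk])] at hswap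
  simp only [if_pos rfl] at hswap
  have hd0 : dcoef c Q 0 = 1 := by
    simp [dcoef]
  rw [hd0] at hswap
  have : ((1/Q : ℝ) : ℂ) = 0 := by simpa using hswap
  rw [Complex.ofReal_eq_zero] at this
  have : (0:ℝ) < 1/Q := by positivity
  simp_all


/-- for `a > 1/2` and `b > 1/2`, the Gaussian Gabor system over
`ℤ² × [[a, a], [-b, b]]ℤ²` is incomplete in `L²(ℝ²)`. -/
theorem gaussian_incomplete_rotated_lattice (a b : ℝ)
    (ha : 1 / 2 < a) (hb : 1 / 2 < b) :
    ∃ F : (Fin 2 → ℝ) → ℂ, MemLp F 2 volume ∧ ¬ (F =ᵐ[volume] 0) ∧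
      ∀ lam ∈ {p : (Fin 2 → ℝ) × (Fin 2 → ℝ) | ∃ m₁ m₂ n₁ n₂ : ℤ,
          p = (![(m₁ : ℝ), (m₂ : ℝ)],
               ![a * ((n₁ : ℝ) + (n₂ : ℝ)), b * ((n₂ : ℝ) - (n₁ : ℝ))])},
        gaborCoef F (gaussian (Fin 2)) lam.1 lam.2 = 0 := by
  have hπ := Real.pi_pos
  set ca : ℝ := 2 * a with hcadef
  set Qa : ℝ := a + 1/2 with hQadef
  set cb : ℝ := 2 * b with hcbdef
  set Qb : ℝ := b + 1/2 with hQbdef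
  have hQa1 : 1 < Qa := by rw [hQadef]; linarith
  have hQac : Qa < ca := by rw [hQadef, hcadef]; linarith
  have hQb1 : 1 < Qb := by rw [hQbdef]; linarith
  have hQbc : Qb < cb := by rw [hQbdef, hcbdef]; linarith
  set u : ℝ → ℂ := Uf ca Qa with hudef
  set vt : ℝ → ℂ := Uf cb Qb with hvtdef
  set v : ℝ → ℂ := fun s => Complex.exp (2 * Real.pi * Complex.I * b * s) * vt s with hvdef
  set F : (Fin 2 → ℝ) → ℂ := fun t => u (t 0) * v (t 1) with hFdef
  have hu_cont : Continuous u := continuous_Uf (le_of_lt hQa1) hQac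
  have hvt_cont : Continuous vt := continuous_Uf (le_of_lt hQb1) hQbc
  have hv_cont : Continuous v :=
    (Complex.continuous_exp.comp (by continuity)).mul hvt_cont
  have hF_cont : Continuous F :=
    (hu_cont.comp (continuous_apply 0)).mul (hv_cont.comp (continuous_apply 1))
  have hnv : ∀ s : ℝ, ‖v s‖ = ‖vt s‖ := by
    intro s
    rw [hvdef]
    simp only [norm_mul]
    have h2 : ‖Complex.exp (2 * Real.pi * Complex.I * b * s)‖ = 1 := by
      have : (2 * (Real.pi:ℂ) * Complex.I * b * s)
          = ((2 * Real.pi * b * s : ℝ) : ℂ) * Complex.I := by push_cast; ring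
      rw [this]
      exact Complex.norm_exp_ofReal_mul_I _
    rw [h2, one_mul]
  -- square-integrability in one variable
  have key_int : ∀ (c Q : ℝ), 1 < Q → Q < c →
      Integrable (fun s : ℝ => ‖Uf c Q s‖ ^ 2) := by
    intro c Q hQ1 hQc
    set D : ℝ := ∑' k : ℤ, |dcoef c Q k| with hDdef
    have hD0 : 0 ≤ D := tsum_nonneg (fun k => abs_nonneg _)
    have hpos : (0:ℝ) < 2 * Real.pi * (Q - 1) := by nlinarith
    apply Integrable.mono' (g := fun s : ℝ => D^2 * Real.exp (-(2 * Real.pi * (Q-1)) * s^2))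
      ((integrable_exp_neg_mul_sq hpos).const_mul _)
      (((continuous_Uf (le_of_lt hQ1) hQc).norm.pow 2).aestronglyMeasurable)
    filter_upwards with s
    show ‖‖Uf c Q s‖ ^ 2‖ ≤ D^2 * Real.exp (-(2 * Real.pi * (Q-1)) * s^2)
    rw [Real.norm_eq_abs, _root_.abs_of_nonneg (by positivity)]
    have h1 := norm_Uf_le hQc s
    calc ‖Uf c Q s‖ ^ 2 ≤ (D * Real.exp (-(Real.pi * (Q - 1) * s ^ 2))) ^ 2 := by
          apply pow_le_pow_left₀ (norm_nonneg _) h1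
      _ = D^2 * Real.exp (-(2 * Real.pi * (Q-1)) * s^2) := by
          rw [mul_pow, sq (Real.exp _), ← Real.exp_add]
          congr 2
          ring
  have hIu : Integrable (fun s : ℝ => ‖u s‖ ^ 2) := key_int ca Qa hQa1 hQac
  have hIv : Integrable (fun s : ℝ => ‖v s‖ ^ 2) := by
    apply (key_int cb Qb hQb1 hQbc).congr
    filter_upwards with s
    rw [hnv s]
  refine ⟨F, ?_, ?_, ?_⟩
  · -- Memℒp
    rw [memLp_two_iff_integrable_sq_norm hF_cont.aestronglyMeasurable]
    have h2 : Integrable (fun p : ℝ × ℝ => ‖u p.1‖^2 * ‖v p.2‖^2) (volume.prod volume) :=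
      hIu.mul_prod hIv
    have h3 := ((volume_preserving_finTwoArrow ℝ).integrable_comp_emb
      (MeasurableEquiv.finTwoArrow (α := ℝ)).measurableEmbedding
      (g := fun p : ℝ × ℝ => ‖u p.1‖^2 * ‖v p.2‖^2)).mpr
      (by rwa [← Measure.volume_eq_prod] at h2)
    apply h3.congr
    filter_upwards with t
    show ‖u (t 0)‖^2 * ‖v (t 1)‖^2 = ‖F t‖^2
    rw [hFdef]
    simp only [norm_mul, mul_pow]
  · -- not a.e. zero
    intro hae
    have hF0 : F = 0 := (Continuous.ae_eq_iff_eq volume hF_cont continuous_const).mp hae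
    obtain ⟨s1, hs1⟩ := Uf_ne_zero hQa1 hQac
    obtain ⟨s2, hs2⟩ := Uf_ne_zero hQb1 hQbc
    have hv2 : v s2 ≠ 0 := mul_ne_zero (Complex.exp_ne_zero _) hs2
    have : F ![s1, s2] = 0 := by rw [hF0]; rfl
    rw [hFdef] at this
    simp only [Matrix.cons_val_zero, Matrix.cons_val_one, Matrix.head_cons] at this
    exact (mul_ne_zero hs1 hv2) this
  · -- orthogonality
    intro lam hlam
    obtain ⟨m₁, m₂, n₁, n₂, rfl⟩ := hlam
    dsimp only [gaborCoef]
    set ω0 : ℝ := a * ((n₁ : ℝ) + (n₂ : ℝ)) with hω0def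
    set ω1 : ℝ := b * ((n₂ : ℝ) - (n₁ : ℝ)) with hω1def
    set r : ℝ := (2:ℝ) ^ ((2:ℝ)/4) with hrdef
    set P : ℝ → ℂ := fun s => u s * (Complex.exp (-(2*(Real.pi:ℂ)*Complex.I*(ω0:ℂ)*(s:ℂ)))
        * ((r * Real.exp (-(Real.pi * (s - (m₁:ℝ))^2)) : ℝ) : ℂ)) with hPdef
    set R : ℝ → ℂ := fun s => v s * (Complex.exp (-(2*(Real.pi:ℂ)*Complex.I*(ω1:ℂ)*(s:ℂ)))
        * ((Real.exp (-(Real.pi * (s - (m₂:ℝ))^2)) : ℝ) : ℂ)) with hRdef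
    have hint : ∀ t : Fin 2 → ℝ, F t * (starRingEnd ℂ)
        (tfShift ![(m₁ : ℝ), (m₂ : ℝ)] ![ω0, ω1] (gaussian (Fin 2)) t)
        = P (t 0) * R (t 1) := by
      intro t
      rw [hFdef, hPdef, hRdef]
      simp only [tfShift, gaussian, dotR, Fin.sum_univ_two, Pi.sub_apply,
        Matrix.cons_val_zero, Matrix.cons_val_one, Matrix.head_cons, map_mul,
        Complex.conj_ofReal, ← Complex.exp_conj, Complex.conj_I, Fintype.card_fin,
        Complex.ofReal_exp, Complex.ofReal_mul, map_ofNat]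
      have h : Complex.exp ((2:ℂ) * (Real.pi:ℂ) * (-Complex.I) * ((ω0:ℂ) * ((t 0 : ℝ):ℂ)
            + (ω1:ℂ) * ((t 1:ℝ):ℂ)))
          * Complex.exp (-((Real.pi:ℂ) * ((((t 0:ℝ):ℂ) - ((m₁:ℝ):ℂ)) * (((t 0:ℝ):ℂ) - ((m₁:ℝ):ℂ))
              + (((t 1:ℝ):ℂ) - ((m₂:ℝ):ℂ)) * (((t 1:ℝ):ℂ) - ((m₂:ℝ):ℂ)))))
          = Complex.exp (-(2*(Real.pi:ℂ)*Complex.I*(ω0:ℂ)*((t 0 : ℝ):ℂ)))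
            * Complex.exp (-((Real.pi:ℂ) * (((t 0:ℝ):ℂ) - ((m₁:ℝ):ℂ)) ^ 2))
            * (Complex.exp (-(2*(Real.pi:ℂ)*Complex.I*(ω1:ℂ)*((t 1 : ℝ):ℂ)))
              * Complex.exp (-((Real.pi:ℂ) * (((t 1:ℝ):ℂ) - ((m₂:ℝ):ℂ)) ^ 2))) := by
        rw [← Complex.exp_add, ← Complex.exp_add, ← Complex.exp_add, ← Complex.exp_add]
        congr 1
        ring
      push_cast at h ⊢
      linear_combination (u (t 0) * v (t 1) * ((r : ℝ):ℂ)) * h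
    rw [MeasureTheory.integral_congr_ae (Filter.Eventually.of_forall hint)]
    have htrans : ∫ t : Fin 2 → ℝ, P (t 0) * R (t 1) = (∫ s, P s) * (∫ s, R s) := by
      have h1 := (volume_preserving_finTwoArrow ℝ).integral_comp'
        (fun p : ℝ × ℝ => P p.1 * R p.2)
      rw [show (∫ t : Fin 2 → ℝ, P (t 0) * R (t 1)) = ∫ p : ℝ × ℝ, P p.1 * R p.2 from by
        rw [← h1]; rfl]
      rw [Measure.volume_eq_prod, integral_prod_mul]
    rw [htrans]
    rcases Int.even_or_odd (n₁ + n₂) with ⟨l, hl⟩ | ⟨l, hl⟩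
    · -- even case : first factor vanishes
      have hcast : (n₁:ℝ) + (n₂:ℝ) = 2 * (l:ℝ) := by
        have := congrArg (fun z : ℤ => (z : ℝ)) hl
        push_cast at this
        linarith
      have hPeq : ∀ s : ℝ, P s = (Uf ca Qa s
          * (Complex.exp (-(2*(Real.pi:ℂ)*Complex.I*((ca:ℂ)*(l:ℂ))*(s:ℂ)))
            * ((Real.exp (-(Real.pi * (s - (m₁:ℝ))^2)) : ℝ) : ℂ))) * ((r:ℝ):ℂ) := by
        intro s
        rw [hPdef, hudef]
        rw [show ((ω0:ℝ):ℂ) = (ca:ℂ) * (l:ℂ) from by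
          rw [hω0def, hcadef]; push_cast [hcast]; ring]
        push_cast
        ring
      rw [MeasureTheory.integral_congr_ae (Filter.Eventually.of_forall hPeq),
        MeasureTheory.integral_mul_const, oneD hQa1 hQac m₁ l, zero_mul, zero_mul]
    · -- odd case : second factor vanishes
      set l' : ℤ := l - n₁ with hl'def
      have hq : n₂ - n₁ = 2 * l' + 1 := by omega
      have hcast : (n₂:ℝ) - (n₁:ℝ) = 2 * (l':ℝ) + 1 := by
        have := congrArg (fun z : ℤ => (z : ℝ)) hq
        push_cast at this
        linarith
      have hReq : ∀ s : ℝ, R s = Uf cb Qb s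
          * (Complex.exp (-(2*(Real.pi:ℂ)*Complex.I*((cb:ℂ)*(l':ℂ))*(s:ℂ)))
            * ((Real.exp (-(Real.pi * (s - (m₂:ℝ))^2)) : ℝ) : ℂ)) := by
        intro s
        rw [hRdef, hvdef, hvtdef]
        have hmerge : Complex.exp (2 * (Real.pi:ℂ) * Complex.I * (b:ℂ) * (s:ℂ))
            * Complex.exp (-(2*(Real.pi:ℂ)*Complex.I*((ω1:ℝ):ℂ)*(s:ℂ)))
            = Complex.exp (-(2*(Real.pi:ℂ)*Complex.I*((cb:ℂ)*(l':ℂ))*(s:ℂ))) := by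
          rw [← Complex.exp_add]
          congr 1
          rw [show ((ω1:ℝ):ℂ) = (b:ℂ) * (2*(l':ℂ)+1) from by
            rw [hω1def]; push_cast [hcast]; ring]
          rw [hcbdef]
          push_cast
          ring
        calc Complex.exp (2 * (Real.pi:ℂ) * Complex.I * (b:ℂ) * (s:ℂ)) * Uf cb Qb s
              * (Complex.exp (-(2*(Real.pi:ℂ)*Complex.I*((ω1:ℝ):ℂ)*(s:ℂ)))
                * ((Real.exp (-(Real.pi * (s - (m₂:ℝ))^2)) : ℝ) : ℂ))
            = (Complex.exp (2 * (Real.pi:ℂ) * Complex.I * (b:ℂ) * (s:ℂ))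
                * Complex.exp (-(2*(Real.pi:ℂ)*Complex.I*((ω1:ℝ):ℂ)*(s:ℂ))))
              * (Uf cb Qb s * ((Real.exp (-(Real.pi * (s - (m₂:ℝ))^2)) : ℝ) : ℂ)) := by ring
          _ = Uf cb Qb s * (Complex.exp (-(2*(Real.pi:ℂ)*Complex.I*((cb:ℂ)*(l':ℂ))*(s:ℂ)))
                * ((Real.exp (-(Real.pi * (s - (m₂:ℝ))^2)) : ℝ) : ℂ)) := by
              rw [hmerge]; ring
      rw [MeasureTheory.integral_congr_ae (Filter.Eventually.of_forall hReq),
        oneD hQb1 hQbc m₂ l', mul_zero]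
end Aux
end
end

section
/- Let a, b, c > 0 and let Λ = {(m₁, m₂, m₃, a(n₁ + n₂), b(n₂ − n₁), c n₃) : m₁, m₂, m₃, n₁, n₂, n₃ ∈ ℤ} ⊂ ℝ³ × ℝ³. If either (a > 1/2 and b > 1/2) or c > 1, then the Gabor system (g₃, Λ) is incomplete in L²(ℝ³): there exists a nonzero F ∈ L²(ℝ³) with ⟨F, π(λ)g₃⟩ = 0 for all λ ∈ Λ. -/
open MeasureTheory Complex

noncomputable section

namespace GaborAux

open Set

/-- Theta-function coefficients. -/
def dcoef (δ : ℝ) (j : ℤ) : ℝ := (-1 : ℝ) ^ j * Real.exp (-(Real.pi * δ) * (j * (j - 1)))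

/-- The 1-D step-weighted function `F(t) = d_{⌊t/δ⌋} e^{π t²}`. -/
def Fone (δ : ℝ) : ℝ → ℂ :=
  fun t => ((dcoef δ ⌊t / δ⌋ * Real.exp (Real.pi * t ^ 2) : ℝ) : ℂ)

/-- Modulated version of `Fone`. -/
def Fmod (δ θ : ℝ) : ℝ → ℂ :=
  fun t => Complex.exp (2 * (Real.pi : ℂ) * Complex.I * ((θ * t : ℝ) : ℂ)) * Fone δ t

/-- 1-D Gaussian. -/
def g1 : ℝ → ℂ := fun s => ((Real.exp (-(Real.pi * s ^ 2)) : ℝ) : ℂ)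

lemma neg_one_zpow_sub (m j : ℤ) : (-1 : ℝ) ^ (2 * m + 1 - j) = -((-1 : ℝ) ^ j) := by
  have hne : (-1 : ℝ) ≠ 0 := by norm_num
  have h1 : (-1 : ℝ) ^ (2 * m + 1 - j) * (-1 : ℝ) ^ j = (-1 : ℝ) ^ (2 * m + 1) := by
    rw [← zpow_add₀ hne]; ring_nf
  have h2 : (-1 : ℝ) ^ (2 * m + 1) = -1 := by
    rw [zpow_add₀ hne, zpow_mul]; norm_num
  have h3 : (-1 : ℝ) ^ j * (-1 : ℝ) ^ j = 1 := by
    rw [← zpow_add₀ hne, show j + j = 2 * j by ring, zpow_mul]; norm_num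
  calc (-1 : ℝ) ^ (2 * m + 1 - j) = (-1 : ℝ) ^ (2 * m + 1 - j) * ((-1 : ℝ) ^ j * (-1 : ℝ) ^ j) := by
        rw [h3]; ring
    _ = ((-1 : ℝ) ^ (2 * m + 1 - j) * (-1 : ℝ) ^ j) * (-1 : ℝ) ^ j := by ring
    _ = -((-1 : ℝ) ^ j) := by rw [h1, h2]; ring

lemma theta_sum (δ : ℝ) (m : ℤ) :
    ∑' j : ℤ, (((-1 : ℝ) ^ j *
      Real.exp (Real.pi * δ * (2 * (m : ℝ) * j - j * (j - 1))) : ℝ) : ℂ) = 0 := by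
  set f : ℤ → ℂ := fun j => (((-1 : ℝ) ^ j *
    Real.exp (Real.pi * δ * (2 * (m : ℝ) * j - j * (j - 1))) : ℝ) : ℂ) with hf
  have key : ∀ j : ℤ, f (2 * m + 1 - j) = -f j := by
    intro j
    have hexp : Real.pi * δ * (2 * (m : ℝ) * ((2 * m + 1 - j : ℤ) : ℝ)
          - ((2 * m + 1 - j : ℤ) : ℝ) * (((2 * m + 1 - j : ℤ) : ℝ) - 1))
        = Real.pi * δ * (2 * (m : ℝ) * j - (j : ℝ) * ((j : ℝ) - 1)) := by
      push_cast; ring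
    simp only [hf, hexp, neg_one_zpow_sub]
    push_cast
    ring
  have h1 : ∑' j : ℤ, f ((Equiv.subLeft (2 * m + 1)) j) = ∑' j : ℤ, f j :=
    (Equiv.subLeft (2 * m + 1)).tsum_eq f
  have h2 : ∑' j : ℤ, f ((Equiv.subLeft (2 * m + 1)) j) = -∑' j : ℤ, f j := by
    simp only [Equiv.subLeft_apply, key]
    exact tsum_neg
  have h3 : ∑' j : ℤ, f j = -∑' j : ℤ, f j := h1.symm.trans h2
  linear_combination h3 / 2


lemma abs_dcoef (δ : ℝ) (j : ℤ) :
    |dcoef δ j| = Real.exp (-(Real.pi * δ) * (j * (j - 1))) := by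
  unfold dcoef
  have h1 : |(-1 : ℝ) ^ j| = 1 := by
    rcases Int.even_or_odd j with h | h
    · rw [h.neg_one_zpow]; norm_num
    · rw [h.neg_one_zpow]; norm_num
  rw [_root_.abs_mul, h1, one_mul, Real.abs_exp]

lemma dcoef_ne_zero (δ : ℝ) (j : ℤ) : dcoef δ j ≠ 0 :=
  mul_ne_zero (zpow_ne_zero _ (by norm_num)) (Real.exp_ne_zero _)

lemma floor_quad_bound (δ : ℝ) (hδ0 : 0 < δ) (t : ℝ) :
    -(Real.pi * δ) * ((⌊t / δ⌋ : ℝ) * ((⌊t / δ⌋ : ℝ) - 1)) ≤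
      -(Real.pi / δ) * t ^ 2 + 3 * Real.pi * |t| + 2 * Real.pi * δ := by
  have hπ := Real.pi_pos
  set u : ℝ := t / δ with hu
  set j : ℝ := ((⌊u⌋ : ℤ) : ℝ) with hj
  have hj1 : j ≤ u := Int.floor_le u
  have hj2 : u - 1 < j := Int.sub_one_lt_floor u
  have claim : u ^ 2 - 3 * |u| - 2 ≤ j * (j - 1) := by
    rcases abs_cases u with ⟨h, h0⟩ | ⟨h, h0⟩
    · rw [h]
      nlinarith [mul_nonneg h0 (by linarith : (0:ℝ) ≤ j - u + 1),
        mul_nonneg (by linarith : (0:ℝ) ≤ u - j) (by linarith : (0:ℝ) ≤ j - u + 1)]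
    · rw [h]
      nlinarith [mul_nonneg (by linarith : (0:ℝ) ≤ u - j) (by linarith : (0:ℝ) ≤ -(j + u))]
  have hmul := mul_le_mul_of_nonneg_left claim (by positivity : (0:ℝ) ≤ Real.pi * δ)
  have hkey : Real.pi * δ * (u ^ 2 - 3 * |u| - 2)
      = Real.pi / δ * t ^ 2 - 3 * Real.pi * |t| - 2 * Real.pi * δ := by
    have habs : |u| = |t| / δ := by rw [hu, abs_div, abs_of_pos hδ0]
    rw [habs, hu]
    field_simp
  nlinarith [hmul]

lemma integrable_exp_quad (A B : ℝ) (hA : 0 < A) :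
    Integrable (fun t : ℝ => Real.exp (-A * t ^ 2 + B * |t|)) := by
  have hg : Integrable (fun t : ℝ => Real.exp (B ^ 2 / (2 * A)) * Real.exp (-(A / 2) * t ^ 2)) :=
    (integrable_exp_neg_mul_sq (by linarith : (0:ℝ) < A / 2)).const_mul _
  refine hg.mono' ?_ ?_
  · exact (Real.continuous_exp.comp (by continuity)).aestronglyMeasurable
  · filter_upwards with t
    rw [Real.norm_eq_abs, Real.abs_exp, ← Real.exp_add]
    apply Real.exp_le_exp.2
    set K : ℝ := B ^ 2 / (2 * A) with hKdef
    set s : ℝ := |t| with hs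
    have hs2 : s ^ 2 = t ^ 2 := _root_.sq_abs t
    rw [← sub_nonneg]
    have heq : K + -(A / 2) * t ^ 2 - (-A * t ^ 2 + B * s) = (A * s - B) ^ 2 / (2 * A) := by
      rw [hKdef, ← hs2]; field_simp; ring
    rw [heq]; positivity


lemma core (δ θ ω x : ℝ) (hδ0 : 0 < δ) (m n : ℤ)
    (hx : x = (m : ℝ)) (hω : ω = θ + n / δ) :
    ∫ s : ℝ, Fmod δ θ s * (starRingEnd ℂ)
      (Complex.exp (2 * (Real.pi : ℂ) * Complex.I * ((ω * s : ℝ) : ℂ)) *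
        (((2:ℝ) ^ ((1:ℝ)/4) * Real.exp (-(Real.pi * ((s - x) * (s - x)))) : ℝ) : ℂ)) = 0 := by
  have hπ := Real.pi_pos
  have hδne : δ ≠ 0 := ne_of_gt hδ0
  subst hx hω
  set α : ℂ := (((2 * Real.pi * (m:ℝ)) : ℝ) : ℂ) - (((2 * Real.pi * ((n:ℝ) / δ)) : ℝ) : ℂ) * Complex.I with hαdef
  set C : ℂ := (((2:ℝ) ^ ((1:ℝ)/4) * Real.exp (-(Real.pi * (m:ℝ) ^ 2)) : ℝ) : ℂ) with hCdef
  -- pointwise closed form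
  have hH : ∀ s : ℝ,
      Fmod δ θ s * (starRingEnd ℂ)
        (Complex.exp (2 * (Real.pi : ℂ) * Complex.I * (((θ + n / δ) * s : ℝ) : ℂ)) *
          (((2:ℝ) ^ ((1:ℝ)/4) * Real.exp (-(Real.pi * ((s - (m:ℝ)) * (s - (m:ℝ))))) : ℝ) : ℂ))
      = C * ((dcoef δ ⌊s / δ⌋ : ℝ) : ℂ) * Complex.exp (α * (s : ℂ)) := by
    intro s
    rw [hαdef, hCdef]
    simp only [Fmod, Fone]
    rw [map_mul, ← Complex.exp_conj]
    rw [Complex.conj_ofReal]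
    push_cast
    rw [show (starRingEnd ℂ) (2 * (Real.pi:ℂ) * Complex.I * (((θ:ℂ) + (n:ℂ) / (δ:ℂ)) * (s:ℂ)))
        = -(2 * (Real.pi:ℂ) * Complex.I * (((θ:ℂ) + (n:ℂ) / (δ:ℂ)) * (s:ℂ))) from by
      simp only [map_mul, map_add, map_div₀, map_ofNat, Complex.conj_I, Complex.conj_ofReal,
        map_intCast]
      ring]
    have hexp : cexp (2 * (Real.pi:ℂ) * Complex.I * ((θ:ℂ) * (s:ℂ))) * cexp ((Real.pi:ℂ) * (s:ℂ) ^ 2) *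
        cexp (-(2 * (Real.pi:ℂ) * Complex.I * (((θ:ℂ) + (n:ℂ) / (δ:ℂ)) * (s:ℂ)))) *
        cexp (-((Real.pi:ℂ) * (((s:ℂ) - (m:ℂ)) * ((s:ℂ) - (m:ℂ))))) =
        cexp (-((Real.pi:ℂ) * (m:ℂ) ^ 2)) *
        cexp ((2 * (Real.pi:ℂ) * (m:ℂ) - 2 * (Real.pi:ℂ) * ((n:ℂ) / (δ:ℂ)) * Complex.I) * (s:ℂ)) := by
      rw [← Complex.exp_add, ← Complex.exp_add, ← Complex.exp_add, ← Complex.exp_add]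
      congr 1
      have hδc : (δ:ℂ) ≠ 0 := ofReal_ne_zero.2 hδne
      field_simp
      ring
    linear_combination (((2:ℝ) ^ ((1:ℝ)/4) : ℝ) : ℂ) * ((dcoef δ ⌊s / δ⌋ : ℝ) : ℂ) * hexp
  rw [show (fun s : ℝ => Fmod δ θ s * (starRingEnd ℂ)
      (Complex.exp (2 * (Real.pi : ℂ) * Complex.I * (((θ + n / δ) * s : ℝ) : ℂ)) *
        (((2:ℝ) ^ ((1:ℝ)/4) * Real.exp (-(Real.pi * ((s - (m:ℝ)) * (s - (m:ℝ))))) : ℝ) : ℂ)))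
      = fun s : ℝ => C * ((dcoef δ ⌊s / δ⌋ : ℝ) : ℂ) * Complex.exp (α * (s : ℂ)) from funext hH]
  set D : ℝ → ℂ := fun s : ℝ => C * ((dcoef δ ⌊s / δ⌋ : ℝ) : ℂ) * Complex.exp (α * (s : ℂ))
    with hDdef
  -- measurability
  have hmeasD : AEStronglyMeasurable D volume := by
    have h1 : Measurable fun s : ℝ => dcoef δ ⌊s / δ⌋ := by
      apply Measurable.comp (f := fun s : ℝ => ⌊s / δ⌋) (g := dcoef δ)
      · exact measurable_from_top
      · exact Int.measurable_floor.comp (measurable_id.div_const δ)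
    exact ((measurable_const.mul (Complex.measurable_ofReal.comp h1)).mul
      (Complex.measurable_exp.comp (measurable_const.mul Complex.measurable_ofReal))).aestronglyMeasurable
  -- norm bound and integrability
  have hre : ∀ s : ℝ, (α * (s:ℂ)).re = 2 * Real.pi * (m:ℝ) * s := by
    intro s
    rw [hαdef]
    simp [Complex.sub_re, Complex.mul_re, Complex.ofReal_re, Complex.ofReal_im]
  have hintD : Integrable D := by
    refine ((integrable_exp_quad (Real.pi/δ) (3 * Real.pi + 2 * Real.pi * |(m:ℝ)|)
      (by positivity)).const_mul (‖C‖ * Real.exp (2*Real.pi*δ))).mono' hmeasD ?_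
    filter_upwards with s
    have h1 : ‖D s‖ = ‖C‖ * |dcoef δ ⌊s / δ⌋| * Real.exp (2 * Real.pi * (m:ℝ) * s) := by
      rw [hDdef]
      simp only [norm_mul, Complex.norm_real, Real.norm_eq_abs,
        Complex.norm_exp, hre s]
    rw [h1, abs_dcoef]
    have h2 : 2 * Real.pi * (m:ℝ) * s ≤ 2 * Real.pi * |(m:ℝ)| * |s| := by
      have h0 : (m:ℝ) * s ≤ |(m:ℝ)| * |s| := le_trans (le_abs_self _) (le_of_eq (abs_mul _ _))
      nlinarith
    have h3 := floor_quad_bound δ hδ0 s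
    calc ‖C‖ * Real.exp (-(Real.pi * δ) * ((⌊s / δ⌋:ℝ) * ((⌊s / δ⌋:ℝ) - 1)))
          * Real.exp (2 * Real.pi * (m:ℝ) * s)
        = ‖C‖ * Real.exp (-(Real.pi * δ) * ((⌊s / δ⌋:ℝ) * ((⌊s / δ⌋:ℝ) - 1))
            + 2 * Real.pi * (m:ℝ) * s) := by rw [mul_assoc, ← Real.exp_add]
      _ ≤ ‖C‖ * Real.exp (2 * Real.pi * δ
            + (-(Real.pi/δ) * s ^ 2 + (3 * Real.pi + 2 * Real.pi * |(m:ℝ)|) * |s|)) := by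
          refine mul_le_mul_of_nonneg_left (Real.exp_le_exp.2 ?_) (norm_nonneg C)
          nlinarith [h2, h3]
      _ = ‖C‖ * Real.exp (2 * Real.pi * δ)
            * Real.exp (-(Real.pi/δ) * s ^ 2 + (3 * Real.pi + 2 * Real.pi * |(m:ℝ)|) * |s|) := by
          rw [Real.exp_add, ← mul_assoc]
  -- partition of ℝ into the intervals [jδ, (j+1)δ)
  set Sj : ℤ → Set ℝ := fun j => Ico ((j:ℝ)*δ) (((j:ℝ)+1)*δ) with hSj
  have hcover : (⋃ j : ℤ, Sj j) = univ := by
    ext t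
    simp only [hSj, mem_iUnion, mem_Ico, mem_univ, iff_true]
    refine ⟨⌊t/δ⌋, (le_div_iff₀ hδ0).1 (Int.floor_le (t/δ)), ?_⟩
    have := Int.lt_floor_add_one (t/δ)
    rw [div_lt_iff₀ hδ0] at this
    linarith [this]
  have hdisj : Pairwise (Function.onFun Disjoint Sj) := by
    intro i j hij
    simp only [Function.onFun, hSj]
    rw [Set.Ico_disjoint_Ico]
    rcases hij.lt_or_gt with h | h
    · have h1 : ((i:ℝ)+1) ≤ (j:ℝ) := by exact_mod_cast Int.add_one_le_iff.mpr h
      have h2 : ((i:ℝ)+1)*δ ≤ (j:ℝ)*δ := mul_le_mul_of_nonneg_right h1 hδ0.le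
      exact le_trans (min_le_left _ _) (le_trans h2 (le_max_right _ _))
    · have h1 : ((j:ℝ)+1) ≤ (i:ℝ) := by exact_mod_cast Int.add_one_le_iff.mpr h
      have h2 : ((j:ℝ)+1)*δ ≤ (i:ℝ)*δ := mul_le_mul_of_nonneg_right h1 hδ0.le
      exact le_trans (min_le_right _ _) (le_trans h2 (le_max_left _ _))
  have hsum : HasSum (fun j : ℤ => ∫ s in Sj j, D s) (∫ s : ℝ, D s) := by
    have := hasSum_integral_iUnion (μ := volume) (f := D) (fun j : ℤ => measurableSet_Ico)
      hdisj (by rw [hcover]; exact hintD.integrableOn)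
    rwa [hcover, setIntegral_univ] at this
  have hfloor : ∀ (j : ℤ) (t : ℝ), t ∈ Sj j → ⌊t / δ⌋ = j := by
    intro j t ht
    simp only [hSj, mem_Ico] at ht
    rw [Int.floor_eq_iff]
    constructor
    · exact (le_div_iff₀ hδ0).2 ht.1
    · rw [div_lt_iff₀ hδ0]; exact_mod_cast ht.2
  have hpiece : ∀ j : ℤ, ∫ s in Sj j, D s
      = C * ((dcoef δ j : ℝ) : ℂ) * ∫ s in Sj j, Complex.exp (α * (s:ℂ)) := by
    intro j
    rw [← integral_const_mul]
    refine setIntegral_congr_fun measurableSet_Ico ?_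
    intro t ht
    simp only [hDdef]
    rw [hfloor j t ht]
  have hIoc : ∀ j : ℤ, ∫ s in Sj j, Complex.exp (α * (s:ℂ))
      = ∫ s in ((j:ℝ)*δ)..(((j:ℝ)+1)*δ), Complex.exp (α * (s:ℂ)) := by
    intro j
    rw [hSj]
    rw [setIntegral_congr_set Ico_ae_eq_Ioc,
      ← intervalIntegral.integral_of_le (by nlinarith : (j:ℝ)*δ ≤ ((j:ℝ)+1)*δ)]
  rw [← hsum.tsum_eq]
  by_cases hα : α = 0
  · -- then m = 0 (and n = 0); each interval integral is δ
    have hm : (m:ℝ) = 0 := by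
      have h0 := congrArg Complex.re hα
      rw [hαdef] at h0
      simp only [Complex.sub_re, Complex.ofReal_re, Complex.mul_re, Complex.I_re,
        Complex.ofReal_im, Complex.I_im, Complex.zero_re] at h0
      nlinarith [h0, hπ]
    have hval : ∀ j : ℤ, ∫ s in Sj j, D s = (C * (δ:ℂ)) * (((-1 : ℝ) ^ j *
        Real.exp (Real.pi * δ * (2 * (m : ℝ) * j - j * (j - 1))) : ℝ) : ℂ) := by
      intro j
      rw [hpiece j, hα]
      simp only [zero_mul, Complex.exp_zero]
      rw [setIntegral_const]
      simp only [hSj, Real.volume_real_Ico, smul_eq_mul, mul_one]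
      rw [show ((j:ℝ)+1)*δ - (j:ℝ)*δ = δ by ring, max_eq_left hδ0.le]
      have hd : dcoef δ j = (-1 : ℝ) ^ j *
          Real.exp (Real.pi * δ * (2 * (m : ℝ) * j - j * (j - 1))) := by
        rw [dcoef, show Real.pi * δ * (2 * (m : ℝ) * j - (j:ℝ) * ((j:ℝ) - 1))
          = -(Real.pi * δ) * ((j:ℝ) * ((j:ℝ) - 1)) by rw [hm]; ring]
      rw [hd]
      push_cast [Complex.real_smul]
      ring
    rw [tsum_congr hval, tsum_mul_left, theta_sum, mul_zero]
  · -- nonzero exponent: explicit antiderivative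
    have ha : ∀ j : ℤ, Complex.exp (α * (((j:ℝ)*δ : ℝ):ℂ))
        = ((Real.exp (2*Real.pi*(m:ℝ)*δ*(j:ℝ)) : ℝ) : ℂ) := by
      intro j
      have h0 : α * (((j:ℝ)*δ : ℝ):ℂ) = ((2*Real.pi*(m:ℝ)*δ*(j:ℝ) : ℝ) : ℂ)
          + ((-(n*j) : ℤ) : ℂ) * (2*(Real.pi:ℂ)*Complex.I) := by
        have hδc : (δ:ℂ) ≠ 0 := ofReal_ne_zero.2 hδne
        rw [hαdef]; push_cast; field_simp; ring
      rw [h0, Complex.exp_add, Complex.exp_int_mul_two_pi_mul_I, mul_one, Complex.ofReal_exp]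
    have hb : ∀ j : ℤ, Complex.exp (α * ((((j:ℝ)+1)*δ : ℝ):ℂ))
        = ((Real.exp (2*Real.pi*(m:ℝ)*δ*((j:ℝ)+1)) : ℝ) : ℂ) := by
      intro j
      have h0 : α * ((((j:ℝ)+1)*δ : ℝ):ℂ) = ((2*Real.pi*(m:ℝ)*δ*((j:ℝ)+1) : ℝ) : ℂ)
          + ((-(n*(j+1)) : ℤ) : ℂ) * (2*(Real.pi:ℂ)*Complex.I) := by
        have hδc : (δ:ℂ) ≠ 0 := ofReal_ne_zero.2 hδne
        rw [hαdef]; push_cast; field_simp; ring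
      rw [h0, Complex.exp_add, Complex.exp_int_mul_two_pi_mul_I, mul_one, Complex.ofReal_exp]
    have hreal : ∀ j : ℤ, dcoef δ j * (Real.exp (2*Real.pi*(m:ℝ)*δ*((j:ℝ)+1))
          - Real.exp (2*Real.pi*(m:ℝ)*δ*(j:ℝ)))
        = (Real.exp (2*Real.pi*(m:ℝ)*δ) - 1) * ((-1 : ℝ) ^ j *
          Real.exp (Real.pi * δ * (2 * (m : ℝ) * j - j * (j - 1)))) := by
      intro j
      rw [dcoef, show 2*Real.pi*(m:ℝ)*δ*((j:ℝ)+1)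
          = (2*Real.pi*(m:ℝ)*δ) + 2*Real.pi*(m:ℝ)*δ*(j:ℝ) by ring, Real.exp_add,
        show Real.pi * δ * (2 * (m : ℝ) * (j:ℝ) - (j:ℝ) * ((j:ℝ) - 1))
          = -(Real.pi * δ) * ((j:ℝ) * ((j:ℝ) - 1)) + 2*Real.pi*(m:ℝ)*δ*(j:ℝ) by ring,
        Real.exp_add]
      ring
    have hval : ∀ j : ℤ, ∫ s in Sj j, D s
        = (C * ((Real.exp (2*Real.pi*(m:ℝ)*δ) - 1 : ℝ) : ℂ) / α) * (((-1 : ℝ) ^ j *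
          Real.exp (Real.pi * δ * (2 * (m : ℝ) * j - j * (j - 1))) : ℝ) : ℂ) := by
      intro j
      rw [hpiece j, hIoc j, integral_exp_mul_complex hα, hb j, ha j]
      have hc := congrArg (fun r : ℝ => (r : ℂ)) (hreal j)
      push_cast at hc ⊢
      field_simp
      rw [show ((Real.pi:ℂ) * (δ:ℂ) * (j:ℂ) * (2 * (m:ℂ) - ((j:ℂ) - 1)))
          = (Real.pi:ℂ) * (δ:ℂ) * (2 * (m:ℂ) * (j:ℂ) - (j:ℂ) * ((j:ℂ) - 1)) by ring]
      linear_combination C * hc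
    rw [tsum_congr hval, tsum_mul_left, theta_sum, mul_zero]

lemma gaussian_shift_prod (x ω t : Fin 3 → ℝ) :
    tfShift x ω (gaussian (Fin 3)) t =
      ∏ i, (Complex.exp (2 * (Real.pi : ℂ) * Complex.I * ((ω i * t i : ℝ) : ℂ)) *
        (((2:ℝ) ^ ((1:ℝ)/4) * Real.exp (-(Real.pi * ((t i - x i) * (t i - x i)))) : ℝ) : ℂ)) := by
  rw [Finset.prod_mul_distrib]
  unfold tfShift gaussian dotR
  congr 1
  · rw [← Complex.exp_sum]
    congr 1
    push_cast
    rw [Finset.mul_sum]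
  · rw [← Complex.ofReal_prod]
    norm_cast
    rw [Finset.prod_mul_distrib, Finset.prod_const, ← Real.exp_sum]
    congr 1
    · rw [Finset.card_univ, Fintype.card_fin,
        ← Real.rpow_natCast ((2:ℝ) ^ ((1:ℝ)/4)) 3, ← Real.rpow_mul (by norm_num : (0:ℝ) ≤ 2)]
      norm_num
    · congr 1
      simp only [Pi.sub_apply]
      rw [Finset.mul_sum, ← Finset.sum_neg_distrib]

lemma gaborCoef_prod (f' : Fin 3 → ℝ → ℂ) (x ω : Fin 3 → ℝ) :
    gaborCoef (fun t : Fin 3 → ℝ => ∏ i, f' i (t i)) (gaussian (Fin 3)) x ω =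
      ∏ i, ∫ s : ℝ, f' i s * (starRingEnd ℂ)
        (Complex.exp (2 * (Real.pi : ℂ) * Complex.I * ((ω i * s : ℝ) : ℂ)) *
          (((2:ℝ) ^ ((1:ℝ)/4) * Real.exp (-(Real.pi * ((s - x i) * (s - x i)))) : ℝ) : ℂ)) := by
  unfold gaborCoef
  rw [show (fun t : Fin 3 → ℝ =>
        (∏ i, f' i (t i)) * (starRingEnd ℂ) (tfShift x ω (gaussian (Fin 3)) t))
      = fun t : Fin 3 → ℝ => ∏ i, (fun s : ℝ => f' i s * (starRingEnd ℂ)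
          (Complex.exp (2 * (Real.pi : ℂ) * Complex.I * ((ω i * s : ℝ) : ℂ)) *
            (((2:ℝ) ^ ((1:ℝ)/4) * Real.exp (-(Real.pi * ((s - x i) * (s - x i)))) : ℝ) : ℂ))) (t i)
      from funext fun t => by
        rw [gaussian_shift_prod, map_prod, ← Finset.prod_mul_distrib]]
  exact MeasureTheory.integral_fintype_prod_eq_prod
    (fun i (s : ℝ) => f' i s * (starRingEnd ℂ)
      (Complex.exp (2 * (Real.pi : ℂ) * Complex.I * ((ω i * s : ℝ) : ℂ)) *
        (((2:ℝ) ^ ((1:ℝ)/4) * Real.exp (-(Real.pi * ((s - x i) * (s - x i)))) : ℝ) : ℂ)))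

lemma memLp_prod (f' : Fin 3 → ℝ → ℂ) (hm : ∀ i, Measurable (f' i))
    (hi : ∀ i, Integrable (fun s : ℝ => ‖f' i s‖ ^ 2)) :
    MemLp (fun t : Fin 3 → ℝ => ∏ i, f' i (t i)) 2 volume := by
  have hms : AEStronglyMeasurable (fun t : Fin 3 → ℝ => ∏ i, f' i (t i)) volume :=
    (Finset.measurable_prod _ (fun i _ => (hm i).comp (measurable_pi_apply i))).aestronglyMeasurable
  rw [memLp_two_iff_integrable_sq_norm hms]
  refine (MeasureTheory.Integrable.fintype_prod (f := fun i (s : ℝ) => ‖f' i s‖ ^ 2) hi).congr ?_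
  filter_upwards with t
  rw [norm_prod, Finset.prod_pow]


lemma measurable_Fone (δ : ℝ) : Measurable (Fone δ) := by
  apply Complex.measurable_ofReal.comp
  apply Measurable.mul
  · apply Measurable.comp (f := fun s : ℝ => ⌊s / δ⌋) (g := dcoef δ)
    · exact measurable_from_top
    · exact Int.measurable_floor.comp (measurable_id.div_const δ)
  · exact (Real.continuous_exp.comp (by continuity)).measurable

lemma measurable_Fmod (δ θ : ℝ) : Measurable (Fmod δ θ) := by
  apply Measurable.mul
  · exact Complex.measurable_exp.comp
      (measurable_const.mul (Complex.measurable_ofReal.comp (measurable_id.const_mul θ)))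
  · exact measurable_Fone δ

lemma measurable_g1 : Measurable g1 :=
  Complex.measurable_ofReal.comp (Real.continuous_exp.comp (by continuity)).measurable

lemma norm_Fone (δ : ℝ) (t : ℝ) :
    ‖Fone δ t‖ = |dcoef δ ⌊t / δ⌋| * Real.exp (Real.pi * t ^ 2) := by
  rw [Fone, Complex.norm_real, Real.norm_eq_abs, abs_mul, Real.abs_exp]

lemma norm_Fmod (δ θ : ℝ) (t : ℝ) : ‖Fmod δ θ t‖ = ‖Fone δ t‖ := by
  rw [Fmod, norm_mul]
  have h0 : (2 * (Real.pi : ℂ) * Complex.I * ((θ * t : ℝ) : ℂ)).re = 0 := by simp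
  rw [Complex.norm_exp, h0, Real.exp_zero, one_mul]

lemma integrable_sq_Fmod (δ θ : ℝ) (hδ0 : 0 < δ) (hδ1 : δ < 1) :
    Integrable (fun s : ℝ => ‖Fmod δ θ s‖ ^ 2) := by
  have hπ := Real.pi_pos
  have hδ' : 0 < 1/δ - 1 := by
    have h1 : 1 < 1/δ := by rw [lt_div_iff₀ hδ0]; linarith
    linarith
  refine ((integrable_exp_quad (2*Real.pi*(1/δ-1)) (6*Real.pi)
      (by positivity)).const_mul ((Real.exp (2*Real.pi*δ))^2)).mono' ?_ ?_
  · exact (((measurable_Fmod δ θ).norm).pow_const 2).aestronglyMeasurable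
  · filter_upwards with s
    rw [Real.norm_eq_abs, _root_.abs_of_nonneg (by positivity), norm_Fmod, norm_Fone, abs_dcoef]
    have hX : -(Real.pi*δ)*((⌊s/δ⌋:ℝ)*((⌊s/δ⌋:ℝ)-1)) + Real.pi*s^2
        ≤ 2*Real.pi*δ + (-(Real.pi*(1/δ-1))*s^2 + 3*Real.pi*|s|) := by
      have hid : -(Real.pi/δ)*s^2 + Real.pi*s^2 = -(Real.pi*(1/δ-1))*s^2 := by
        field_simp; ring
      linarith [floor_quad_bound δ hδ0 s, hid]
    calc (Real.exp (-(Real.pi*δ)*((⌊s/δ⌋:ℝ)*((⌊s/δ⌋:ℝ)-1))) * Real.exp (Real.pi*s^2))^2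
        = Real.exp ((-(Real.pi*δ)*((⌊s/δ⌋:ℝ)*((⌊s/δ⌋:ℝ)-1)) + Real.pi*s^2)
            + (-(Real.pi*δ)*((⌊s/δ⌋:ℝ)*((⌊s/δ⌋:ℝ)-1)) + Real.pi*s^2)) := by
          rw [← Real.exp_add, sq, ← Real.exp_add]
      _ ≤ Real.exp ((2*Real.pi*δ + (-(Real.pi*(1/δ-1))*s^2 + 3*Real.pi*|s|))
            + (2*Real.pi*δ + (-(Real.pi*(1/δ-1))*s^2 + 3*Real.pi*|s|))) :=
          Real.exp_le_exp.2 (by linarith [hX])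
      _ = (Real.exp (2*Real.pi*δ))^2
            * Real.exp (-(2*Real.pi*(1/δ-1))*s^2 + 6*Real.pi*|s|) := by
          rw [pow_two (Real.exp (2*Real.pi*δ)), ← Real.exp_add, ← Real.exp_add]
          congr 1
          ring

lemma integrable_sq_g1 : Integrable (fun s : ℝ => ‖g1 s‖ ^ 2) := by
  have hπ := Real.pi_pos
  refine ((integrable_exp_quad (2*Real.pi) 0 (by positivity)).const_mul 1).mono' ?_ ?_
  · exact ((measurable_g1.norm).pow_const 2).aestronglyMeasurable
  · filter_upwards with s
    rw [Real.norm_eq_abs, _root_.abs_of_nonneg (by positivity), one_mul]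
    have h1 : ‖g1 s‖ = Real.exp (-(Real.pi * s ^ 2)) := by
      rw [g1, Complex.norm_real, Real.norm_eq_abs, Real.abs_exp]
    rw [h1, sq, ← Real.exp_add]
    apply Real.exp_le_exp.2
    nlinarith [abs_nonneg s, hπ]

lemma Fmod_ne_zero (δ θ : ℝ) (t : ℝ) : Fmod δ θ t ≠ 0 := by
  apply mul_ne_zero (Complex.exp_ne_zero _)
  rw [Fone]
  exact Complex.ofReal_ne_zero.2 (mul_ne_zero (dcoef_ne_zero _ _) (Real.exp_ne_zero _))

lemma g1_ne_zero (t : ℝ) : g1 t ≠ 0 :=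
  Complex.ofReal_ne_zero.2 (Real.exp_ne_zero _)

lemma not_ae_zero (F : (Fin 3 → ℝ) → ℂ) (h : ∀ t, F t ≠ 0) :
    ¬ (F =ᵐ[volume] 0) := by
  intro hae
  have h0 : (volume : Measure (Fin 3 → ℝ)) ≠ 0 := by
    intro h0
    have h1 : (volume : Measure (Fin 3 → ℝ)) (Set.pi Set.univ (fun _ => Ico (0:ℝ) 1)) = 1 := by
      rw [MeasureTheory.volume_pi_pi]
      simp [Real.volume_Ico]
    rw [h0] at h1
    simp at h1
  have : Filter.NeBot (ae (volume : Measure (Fin 3 → ℝ))) := ae_neBot.2 h0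
  obtain ⟨t, ht⟩ := hae.exists
  exact h t (by simpa using ht)

end GaborAux

/-- if `a > 1/2 ∧ b > 1/2`, or `c > 1`, the 3-dimensional Gaussian
Gabor system over the indicated lattice is incomplete in `L²(ℝ³)`. -/


theorem gaussian_incomplete_dim3 (a b c : ℝ)
    (ha : 0 < a) (hb : 0 < b) (hc : 0 < c)
    (hcond : (1 / 2 < a ∧ 1 / 2 < b) ∨ 1 < c) :
    ∃ F : (Fin 3 → ℝ) → ℂ, MemLp F 2 volume ∧ ¬ (F =ᵐ[volume] 0) ∧
      ∀ lam ∈ {p : (Fin 3 → ℝ) × (Fin 3 → ℝ) | ∃ m₁ m₂ m₃ n₁ n₂ n₃ : ℤ,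
          p = (![(m₁ : ℝ), (m₂ : ℝ), (m₃ : ℝ)],
               ![a * ((n₁ : ℝ) + (n₂ : ℝ)), b * ((n₂ : ℝ) - (n₁ : ℝ)), c * (n₃ : ℝ)])},
        gaborCoef F (gaussian (Fin 3)) lam.1 lam.2 = 0 := by
  classical
  rcases hcond with ⟨ha2, hb2⟩ | hc1
  · -- case `a > 1/2` and `b > 1/2`
    set δa : ℝ := 1/(2*a) with hδa
    set δb : ℝ := 1/(2*b) with hδb
    have hδa0 : 0 < δa := by rw [hδa]; positivity
    have hδb0 : 0 < δb := by rw [hδb]; positivity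
    have hδa1 : δa < 1 := by rw [hδa, div_lt_one (by linarith)]; linarith
    have hδb1 : δb < 1 := by rw [hδb, div_lt_one (by linarith)]; linarith
    set f' : Fin 3 → ℝ → ℂ := ![GaborAux.Fmod δa a, GaborAux.Fmod δb 0, GaborAux.g1] with hf'
    refine ⟨fun t => ∏ i, f' i (t i), ?_, ?_, ?_⟩
    · apply GaborAux.memLp_prod
      · intro i
        fin_cases i
        · simpa [hf'] using GaborAux.measurable_Fmod δa a
        · simpa [hf'] using GaborAux.measurable_Fmod δb 0
        · simpa [hf'] using GaborAux.measurable_g1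
      · intro i
        fin_cases i
        · simpa [hf'] using GaborAux.integrable_sq_Fmod δa a hδa0 hδa1
        · simpa [hf'] using GaborAux.integrable_sq_Fmod δb 0 hδb0 hδb1
        · simpa [hf'] using GaborAux.integrable_sq_g1
    · apply GaborAux.not_ae_zero
      intro t
      rw [Fin.prod_univ_three]
      simp only [hf', Matrix.cons_val_zero, Matrix.cons_val_one, Matrix.head_cons,
        Matrix.cons_val_two, Matrix.tail_cons]
      exact mul_ne_zero (mul_ne_zero (GaborAux.Fmod_ne_zero _ _ _)
        (GaborAux.Fmod_ne_zero _ _ _)) (GaborAux.g1_ne_zero _)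
    · intro lam hlam
      simp only [Set.mem_setOf_eq] at hlam
      obtain ⟨m₁, m₂, m₃, n₁, n₂, n₃, hp⟩ := hlam
      subst hp
      rw [GaborAux.gaborCoef_prod f' _ _, Fin.prod_univ_three]
      simp only [hf', Matrix.cons_val_zero, Matrix.cons_val_one, Matrix.head_cons,
        Matrix.cons_val_two, Matrix.tail_cons]
      rcases Int.even_or_odd (n₁ + n₂) with ⟨k, hk⟩ | ⟨k, hk⟩
      · -- `n₁ + n₂` even, hence `n₂ - n₁` even: kill the middle factor
        have hcast : (n₁:ℝ) + (n₂:ℝ) = (k:ℝ) + (k:ℝ) := by exact_mod_cast hk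
        have h1 : b * ((n₂:ℝ) - (n₁:ℝ)) = 0 + ((k - n₁ : ℤ):ℝ) / δb := by
          rw [hδb, one_div, div_inv_eq_mul]
          push_cast
          linear_combination b * hcast
        rw [GaborAux.core δb 0 _ _ hδb0 m₂ (k - n₁) rfl h1]
        simp
      · -- `n₁ + n₂` odd: kill the first factor
        have hcast : (n₁:ℝ) + (n₂:ℝ) = 2*(k:ℝ) + 1 := by exact_mod_cast hk
        have h1 : a * ((n₁:ℝ) + (n₂:ℝ)) = a + (k:ℤ) / δa := by
          rw [hδa, one_div, div_inv_eq_mul]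
          push_cast
          linear_combination a * hcast
        rw [GaborAux.core δa a _ _ hδa0 m₁ k rfl h1]
        simp
  · -- case `c > 1`
    set δc : ℝ := 1/c with hδc
    have hδc0 : 0 < δc := by rw [hδc]; positivity
    have hδc1 : δc < 1 := by rw [hδc, div_lt_one (by linarith)]; linarith
    set f' : Fin 3 → ℝ → ℂ := ![GaborAux.g1, GaborAux.g1, GaborAux.Fmod δc 0] with hf'
    refine ⟨fun t => ∏ i, f' i (t i), ?_, ?_, ?_⟩
    · apply GaborAux.memLp_prod
      · intro i
        fin_cases i
        · simpa [hf'] using GaborAux.measurable_g1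
        · simpa [hf'] using GaborAux.measurable_g1
        · simpa [hf'] using GaborAux.measurable_Fmod δc 0
      · intro i
        fin_cases i
        · simpa [hf'] using GaborAux.integrable_sq_g1
        · simpa [hf'] using GaborAux.integrable_sq_g1
        · simpa [hf'] using GaborAux.integrable_sq_Fmod δc 0 hδc0 hδc1
    · apply GaborAux.not_ae_zero
      intro t
      rw [Fin.prod_univ_three]
      simp only [hf', Matrix.cons_val_zero, Matrix.cons_val_one, Matrix.head_cons,
        Matrix.cons_val_two, Matrix.tail_cons]
      exact mul_ne_zero (mul_ne_zero (GaborAux.g1_ne_zero _) (GaborAux.g1_ne_zero _))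
        (GaborAux.Fmod_ne_zero _ _ _)
    · intro lam hlam
      simp only [Set.mem_setOf_eq] at hlam
      obtain ⟨m₁, m₂, m₃, n₁, n₂, n₃, hp⟩ := hlam
      subst hp
      rw [GaborAux.gaborCoef_prod f' _ _, Fin.prod_univ_three]
      simp only [hf', Matrix.cons_val_zero, Matrix.cons_val_one, Matrix.head_cons,
        Matrix.cons_val_two, Matrix.tail_cons]
      have h1 : c * (n₃:ℝ) = 0 + (n₃:ℤ) / δc := by
        rw [hδc, one_div, div_inv_eq_mul]
        push_cast
        ring
      rw [GaborAux.core δc 0 _ _ hδc0 m₃ n₃ rfl h1]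
      simp
end
end
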